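/- arXiv:0906.2658 — 4 statements merged into one kernel-verified Lean document; each statement's English description precedes it below -/
import Mathlib

section
/- Let ⟨·⟩ : ℚ[t_1,t_2,...] → ℚ be the linear functional with ⟨1⟩ = 1 and ⟨t_{d_1}···t_{d_k}⟩ = (d_1+···+d_k)^{k-3} on monomials, extended x-linearly to ℚ[t][[x]]. Let Z_1(t,x) = Σ_{j>0} x^j t_j j^{j-1}/j!. Then ⟨exp(-Z_1)⟩ = 1 - x as a formal power series in x. -/
/-- The value of the bracket on a monomial `∏ t_j ^ (m j)`: it is `1` on the constant
monomial, and `(d₁+⋯+d_k)^(k-3)` on `t_{d₁}⋯t_{d_k}`, where `k` is the number of factors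
(with multiplicity) and the `d_i` are the variable indices. -/
noncomputable def brval (m : ℕ →₀ ℕ) : ℚ :=
  if m = 0 then 1
  else (((m.sum fun j e => j * e : ℕ) : ℚ)) ^ (((m.sum fun _ e => e : ℕ) : ℤ) - 3)

/-- The bracket `⟨·⟩ : ℚ[t₁,t₂,…] → ℚ`, the linear functional with `⟨1⟩ = 1` and
`⟨t_{d₁}⋯t_{d_k}⟩ = (d₁+⋯+d_k)^(k-3)`. -/
noncomputable def bracket (f : MvPolynomial ℕ ℚ) : ℚ :=
  ∑ m ∈ f.support, f.coeff m * brval m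

/-- `Z_i(t,x) = ∑_{j ≥ 1} x^j t_j j^{j-i} / j!` as a power series in `x` with
coefficients in `ℚ[t]`. -/
noncomputable def Zser (i : ℕ) : PowerSeries (MvPolynomial ℕ ℚ) :=
  PowerSeries.mk fun j =>
    if j = 0 then 0
    else MvPolynomial.C (((j : ℚ) ^ ((j : ℤ) - (i : ℤ))) / (Nat.factorial j : ℚ)) *
      MvPolynomial.X j

/-- `exp(-Z) = ∑_k (-Z)^k / k!`, computed coefficientwise (well defined for `Z` with
vanishing constant term, since then `(Z^k)`'s `n`-th coefficient vanishes for `k > n`). -/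
noncomputable def expNeg (Z : PowerSeries (MvPolynomial ℕ ℚ)) :
    PowerSeries (MvPolynomial ℕ ℚ) :=
  PowerSeries.mk fun n => ∑ k ∈ Finset.range (n + 1),
    MvPolynomial.C ((-1 : ℚ) ^ k / (Nat.factorial k : ℚ)) * PowerSeries.coeff n (Z ^ k)

/-- The `x`-linear extension of the bracket to `ℚ[t][[x]] → ℚ[[x]]`. -/
noncomputable def bracketSeries (F : PowerSeries (MvPolynomial ℕ ℚ)) : PowerSeries ℚ :=
  PowerSeries.mk fun n => bracket (PowerSeries.coeff n F)


open Finset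


lemma alt_sum_choose_mono : ∀ (i : ℕ), ∀ N : ℕ, i < N →
    ∑ j ∈ range (N+1), (-1:ℚ)^j * (N.choose j) * (j:ℚ)^i = 0 := by
  intro i
  induction i using Nat.strong_induction_on with
  | _ i IH =>
    intro N hiN
    rcases Nat.eq_zero_or_pos i with rfl | hi
    · have h := @Int.alternating_sum_range_choose N
      rw [if_neg (by omega)] at h
      have : ((∑ m ∈ range (N + 1), (-1:ℤ) ^ m * (N.choose m) : ℤ) : ℚ) = 0 := by
        rw [h]; norm_num
      push_cast at this
      simpa using this
    · -- i ≥ 1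
      obtain ⟨i', rfl⟩ : ∃ i', i = i' + 1 := ⟨i - 1, by omega⟩
      obtain ⟨N', rfl⟩ : ∃ N', N = N' + 1 := ⟨N - 1, by omega⟩
      -- drop j = 0 term
      have h0 : ∑ j ∈ range (N'+2), (-1:ℚ)^j * ((N'+1).choose j) * (j:ℚ)^(i'+1)
          = ∑ j ∈ range (N'+1), (-1:ℚ)^(j+1) * ((N'+1).choose (j+1)) * ((j:ℚ)+1)^(i'+1) := by
        rw [Finset.sum_range_succ' _ (N'+1)]
        simp [pow_succ]
      rw [h0]
      -- (N'+1).choose (j+1) * (j+1) = (N'+1) * N'.choose j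
      have key : ∀ j : ℕ, (((N'+1).choose (j+1) : ℚ)) * ((j:ℚ)+1)
          = (N'+1) * (N'.choose j) := by
        intro j
        have := Nat.add_one_mul_choose_eq N' j
        have : ((N'+1).choose (j+1) * (j+1) : ℕ) = ((N'+1) * N'.choose j : ℕ) := by
          simpa [Nat.succ_eq_add_one] using this.symm
        have := congrArg (fun n : ℕ => (n : ℚ)) this
        push_cast at this
        linarith
      have h1 : ∀ j ∈ range (N'+1), (-1:ℚ)^(j+1) * ((N'+1).choose (j+1)) * ((j:ℚ)+1)^(i'+1)
          = -((N'+1) : ℚ) * ∑ u ∈ range (i'+1), (i'.choose u) * ((-1:ℚ)^j * (N'.choose j) * (j:ℚ)^u) := by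
        intro j _
        have expand : ((j:ℚ)+1)^(i'+1) = ((j:ℚ)+1)^i' * ((j:ℚ)+1) := pow_succ _ _
        have binom : ((j:ℚ)+1)^i' = ∑ u ∈ range (i'+1), (j:ℚ)^u * (i'.choose u) := by
          have := add_pow (j:ℚ) 1 i'
          simpa using this
        calc (-1:ℚ)^(j+1) * ((N'+1).choose (j+1)) * ((j:ℚ)+1)^(i'+1)
            = (-1:ℚ)^(j+1) * (((N'+1).choose (j+1)) * ((j:ℚ)+1)) * ((j:ℚ)+1)^i' := by ring
          _ = (-1:ℚ)^(j+1) * ((N'+1) * (N'.choose j)) * ((j:ℚ)+1)^i' := by rw [key j]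
          _ = -((N'+1):ℚ) * ((-1:ℚ)^j * (N'.choose j) * ∑ u ∈ range (i'+1), (j:ℚ)^u * (i'.choose u)) := by
              rw [← binom, pow_succ]; ring
          _ = -((N'+1) : ℚ) * ∑ u ∈ range (i'+1), (i'.choose u) * ((-1:ℚ)^j * (N'.choose j) * (j:ℚ)^u) := by
              rw [Finset.mul_sum]
              congr 1
              apply Finset.sum_congr rfl
              intro u _
              ring
      rw [Finset.sum_congr rfl h1, ← Finset.mul_sum, Finset.sum_comm]
      have inner : ∀ u ∈ range (i'+1),
          ∑ j ∈ range (N'+1), (i'.choose u : ℚ) * ((-1:ℚ)^j * (N'.choose j) * (j:ℚ)^u) = 0 := by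
        intro u hu
        simp only [Finset.mem_range] at hu
        rw [← Finset.mul_sum, IH u (by omega) N' (by omega), mul_zero]
      rw [Finset.sum_congr rfl inner]
      simp



lemma alt_sum_choose_poly (N : ℕ) (p : Polynomial ℚ) (h : p.natDegree < N) :
    ∑ j ∈ range (N+1), (-1:ℚ)^j * (N.choose j) * p.eval (j:ℚ) = 0 := by
  have h1 : ∀ j : ℕ, p.eval (j:ℚ) = ∑ u ∈ range (p.natDegree + 1), p.coeff u * (j:ℚ)^u :=
    fun j => Polynomial.eval_eq_sum_range _
  calc ∑ j ∈ range (N+1), (-1:ℚ)^j * (N.choose j) * p.eval (j:ℚ)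
      = ∑ j ∈ range (N+1), ∑ u ∈ range (p.natDegree + 1),
          p.coeff u * ((-1:ℚ)^j * (N.choose j) * (j:ℚ)^u) := by
        apply Finset.sum_congr rfl; intro j _
        rw [h1 j, Finset.mul_sum]
        apply Finset.sum_congr rfl; intro u _; ring
    _ = ∑ u ∈ range (p.natDegree + 1), p.coeff u *
          ∑ j ∈ range (N+1), (-1:ℚ)^j * (N.choose j) * (j:ℚ)^u := by
        rw [Finset.sum_comm]
        apply Finset.sum_congr rfl; intro u _
        rw [Finset.mul_sum]
    _ = 0 := by
        apply Finset.sum_eq_zero; intro u hu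
        simp only [Finset.mem_range] at hu
        rw [alt_sum_choose_mono u N (by omega), mul_zero]

lemma cast_choose_q (a : ℕ) : ∀ i : ℕ, (a.choose i : ℚ)
    = (∏ s ∈ range i, ((a:ℚ) - s)) / (Nat.factorial i) := by
  intro i
  induction i with
  | zero => simp
  | succ i ih =>
    rcases le_or_gt i a with hle | hlt
    · have key := Nat.choose_succ_right_eq a i
      have keyq : (a.choose (i+1) : ℚ) * (i+1) = (a.choose i : ℚ) * ((a:ℚ) - i) := by
        have := congrArg (fun n : ℕ => (n:ℚ)) key
        push_cast [Nat.cast_sub hle] at this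
        convert this using 2
      have hfac : (Nat.factorial (i+1) : ℚ) = (Nat.factorial i : ℚ) * (i+1) := by
        push_cast [Nat.factorial_succ]; ring
      rw [Finset.prod_range_succ, hfac]
      have h1 : ((i:ℚ)+1) ≠ 0 := by positivity
      have h2 : (Nat.factorial i : ℚ) ≠ 0 := by
        exact_mod_cast Nat.factorial_ne_zero i
      rw [eq_div_iff h2] at ih
      field_simp
      calc (a.choose (i+1) : ℚ) * (Nat.factorial i : ℚ) * ((i:ℚ)+1)
          = ((a.choose (i+1) : ℚ) * ((i:ℚ)+1)) * (Nat.factorial i : ℚ) := by ring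
        _ = ((a.choose i : ℚ) * ((a:ℚ) - i)) * (Nat.factorial i : ℚ) := by rw [keyq]
        _ = ((a.choose i : ℚ) * (Nat.factorial i : ℚ)) * ((a:ℚ) - i) := by ring
        _ = (∏ s ∈ range i, ((a:ℚ) - s)) * ((a:ℚ) - i) := by rw [ih]
        _ = _ := by rw [← Finset.prod_range_succ]
    · -- i > a : both sides zero
      rw [Nat.choose_eq_zero_of_lt (by omega)]
      have : (∏ s ∈ range (i+1), ((a:ℚ) - s)) = 0 := by
        apply Finset.prod_eq_zero (Finset.mem_range.mpr (by omega : a < i+1))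
        simp
      rw [this]
      simp

lemma neg_one_pow_sub_q (a b : ℕ) (h : b ≤ a) : (-1:ℚ)^(a-b) = (-1)^a * (-1)^b := by
  have h1 : a - b + b = a := Nat.sub_add_cancel h
  have := pow_add (-1:ℚ) (a-b) b
  rw [h1] at this
  rw [this]
  have hbb : (-1:ℚ)^b * (-1)^b = 1 := by
    rw [← pow_add]
    exact (neg_one_pow_eq_one_iff_even (by norm_num)).mpr ⟨b, rfl⟩
  rw [mul_assoc, hbb, mul_one]

lemma hinner_aux (M : ℕ) (hM : 1 ≤ M) (y : ℚ) (hy : 0 < y) : ∀ i ∈ range M,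
      ∑ j ∈ range M, (M.choose j : ℚ) * (j:ℚ)^((j:ℤ)-1) * y *
          ((y+(M:ℚ))^i * (-(j:ℚ))^(M-1-j-i) * (((M-1-j).choose i : ℚ)))
      = (if i + 1 = M then 0 else
          y*(y+M)^i*(M:ℚ)^(M-2-i) + (if i + 2 = M then y*((M:ℚ)-1)*(y+M)^i else 0)) := by
  intro i hi
  simp only [Finset.mem_range] at hi
  by_cases hiM : i + 1 = M
  · rw [if_pos hiM]
    apply Finset.sum_eq_zero
    intro j hj
    simp only [Finset.mem_range] at hj
    rcases Nat.eq_zero_or_pos j with rfl | hj1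
    · rw [show ((0:ℕ):ℚ) = 0 by norm_num, zero_zpow _ (by norm_num)]
      ring
    · rw [Nat.choose_eq_zero_of_lt (show M-1-j < i by omega), Nat.cast_zero]
      ring
  · rw [if_neg hiM]
    have hi2 : i ≤ M - 2 := by omega
    have hM2 : 2 ≤ M := by omega
    -- (a) for 1 ≤ j ≤ M-1 : term j = c * g j  (explicit)
    have ha : ∀ j : ℕ, 1 ≤ j → j ≤ M-1 →
        (M.choose j : ℚ) * (j:ℚ)^((j:ℤ)-1) * y *
          ((y+(M:ℚ))^i * (-(j:ℚ))^(M-1-j-i) * (((M-1-j).choose i : ℚ)))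
        = (y*(y+(M:ℚ))^i*(-1:ℚ)^(M-1-i)) * ((-1:ℚ)^j * (M.choose j : ℚ) *
            ((∏ s ∈ range i, ((M:ℚ)-1-(j:ℚ)-s)) / (Nat.factorial i) * (j:ℚ)^(M-2-i))) := by
      intro j hj1 hjM
      have hcast : (((M-1-j : ℕ)):ℚ) = (M:ℚ) - 1 - j := by
        push_cast [Nat.cast_sub (show j ≤ M-1 by omega), Nat.cast_sub (show 1 ≤ M by omega)]
        ring
      have hchoose : (((M-1-j).choose i : ℚ)) = (∏ s ∈ range i, ((M:ℚ)-1-(j:ℚ)-s)) / (Nat.factorial i) := by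
        rw [cast_choose_q]
        congr 1
        apply Finset.prod_congr rfl
        intro s _
        rw [hcast]
      have hjz : (j:ℚ)^((j:ℤ)-1) = (j:ℚ)^(j-1 : ℕ) := by
        rw [← zpow_natCast]; congr 1; omega
      by_cases hdeg : i ≤ M-1-j
      · have e1 : (-(j:ℚ))^(M-1-j-i) = (-1:ℚ)^(M-1-j-i) * (j:ℚ)^(M-1-j-i) := by
          rw [neg_pow]
        have e3 : (-1:ℚ)^(M-1-j-i) = (-1:ℚ)^(M-1-i) * (-1:ℚ)^j := by
          rw [show (M-1-j-i) = (M-1-i) - j by omega, neg_one_pow_sub_q _ _ (by omega)]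
        have e4 : (j:ℚ)^(j-1:ℕ) * (j:ℚ)^(M-1-j-i) = (j:ℚ)^(M-2-i) := by
          rw [← pow_add]; congr 1; omega
        rw [hjz, hchoose, e1, e3]
        linear_combination ((M.choose j : ℚ) * y * (y+(M:ℚ))^i * (-1:ℚ)^(M-1-i) * (-1:ℚ)^j *
          ((∏ s ∈ range i, ((M:ℚ)-1-(j:ℚ)-s)) / (Nat.factorial i))) * e4
      · -- degenerate: both sides zero
        have hprodz : (∏ s ∈ range i, ((M:ℚ)-1-(j:ℚ)-s)) = 0 := by
          apply Finset.prod_eq_zero (Finset.mem_range.mpr (show M-1-j < i by omega))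
          rw [← hcast]
          exact sub_self _
        rw [Nat.choose_eq_zero_of_lt (show M-1-j < i by omega), Nat.cast_zero, hprodz]
        ring
    -- polynomial for the alternating sum
    set P : Polynomial ℚ := Polynomial.C ((Nat.factorial i : ℚ)⁻¹) *
        (∏ s ∈ range i, (Polynomial.C ((M:ℚ)-1-(s:ℚ)) - Polynomial.X)) *
        Polynomial.X^(M-2-i) with hP
    have heval : ∀ j : ℕ, P.eval (j:ℚ)
        = (∏ s ∈ range i, ((M:ℚ)-1-(j:ℚ)-s)) / (Nat.factorial i) * (j:ℚ)^(M-2-i) := by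
      intro j
      rw [hP]
      simp only [Polynomial.eval_mul, Polynomial.eval_C, Polynomial.eval_pow,
        Polynomial.eval_X, Polynomial.eval_prod, Polynomial.eval_sub]
      rw [show (∏ s ∈ range i, ((M:ℚ)-1-(s:ℚ)-(j:ℚ))) = ∏ s ∈ range i, ((M:ℚ)-1-(j:ℚ)-(s:ℚ)) from
        Finset.prod_congr rfl (fun s _ => by ring)]
      ring
    have hdegP : P.natDegree < M := by
      rw [hP]
      have h1 : (Polynomial.C ((Nat.factorial i : ℚ)⁻¹) *
          (∏ s ∈ range i, (Polynomial.C ((M:ℚ)-1-(s:ℚ)) - Polynomial.X))).natDegree ≤ i := by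
        apply le_trans (Polynomial.natDegree_mul_le)
        rw [Polynomial.natDegree_C]
        simp only [zero_add]
        apply le_trans (Polynomial.natDegree_prod_le _ _)
        have hone : ∀ s : ℕ, (Polynomial.C ((M:ℚ)-1-(s:ℚ)) - Polynomial.X).natDegree ≤ 1 := by
          intro s
          rw [show Polynomial.C ((M:ℚ)-1-(s:ℚ)) - Polynomial.X
              = -(Polynomial.X - Polynomial.C ((M:ℚ)-1-(s:ℚ))) by ring, Polynomial.natDegree_neg,
            Polynomial.natDegree_X_sub_C]
        have hcard := Finset.sum_le_card_nsmul (range i)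
          (fun s => (Polynomial.C ((M:ℚ)-1-(s:ℚ)) - Polynomial.X).natDegree) 1
          (fun s _ => hone s)
        simp only [Finset.card_range, smul_eq_mul, mul_one] at hcard
        exact hcard
      calc (Polynomial.C ((Nat.factorial i : ℚ)⁻¹) *
          (∏ s ∈ range i, (Polynomial.C ((M:ℚ)-1-(s:ℚ)) - Polynomial.X)) *
          Polynomial.X^(M-2-i)).natDegree
          ≤ _ + (Polynomial.X^(M-2-i) : Polynomial ℚ).natDegree := Polynomial.natDegree_mul_le
        _ ≤ i + (M-2-i) := by
            rw [Polynomial.natDegree_X_pow]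
            exact Nat.add_le_add_right h1 _
        _ < M := by omega
    have hsum0 : ∑ j ∈ range (M+1), (-1:ℚ)^j * (M.choose j) *
        ((∏ s ∈ range i, ((M:ℚ)-1-(j:ℚ)-s)) / (Nat.factorial i) * (j:ℚ)^(M-2-i)) = 0 := by
      calc ∑ j ∈ range (M+1), (-1:ℚ)^j * (M.choose j) *
            ((∏ s ∈ range i, ((M:ℚ)-1-(j:ℚ)-s)) / (Nat.factorial i) * (j:ℚ)^(M-2-i))
          = ∑ j ∈ range (M+1), (-1:ℚ)^j * (M.choose j) * P.eval (j:ℚ) :=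
            Finset.sum_congr rfl (fun j _ => by rw [heval j])
        _ = 0 := alt_sum_choose_poly M P hdegP
    obtain ⟨M', rfl⟩ : ∃ M', M = M'+2 := ⟨M-2, by omega⟩
    have hiM' : i ≤ M' := by omega
    have hfac_ne : ((Nat.factorial i : ℚ)) ≠ 0 := by exact_mod_cast Nat.factorial_ne_zero i
    have hprod1 : ∀ n : ℕ, ∏ s ∈ range n, (1+(s:ℚ)) = (Nat.factorial n : ℚ) := by
      intro n
      induction n with
      | zero => simp
      | succ n ih =>
        rw [Finset.prod_range_succ, ih, Nat.factorial_succ]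
        push_cast
        ring
    -- value of q at M'+2
    have hqM : (∏ s ∈ range i, (((M'+2:ℕ):ℚ)-1-(((M'+2:ℕ)):ℚ)-s)) / (Nat.factorial i)
        * (((M'+2:ℕ)):ℚ)^(M'+2-2-i) = (-1:ℚ)^i * (((M'+2:ℕ)):ℚ)^(M'-i) := by
      have hrw : (∏ s ∈ range i, (((M'+2:ℕ):ℚ)-1-(((M'+2:ℕ)):ℚ)-(s:ℚ)))
          = ∏ s ∈ range i, ((-1) * (1+(s:ℚ))) :=
        Finset.prod_congr rfl (fun s _ => by push_cast; ring)
      rw [hrw, Finset.prod_mul_distrib, Finset.prod_const, Finset.card_range, hprod1 i]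
      rw [show (M'+2-2-i) = M'-i by omega]
      field_simp
    -- value of q at 0
    have hq0 : (∏ s ∈ range i, (((M'+2:ℕ):ℚ)-1-((0:ℕ):ℚ)-s)) / (Nat.factorial i)
        * ((0:ℕ):ℚ)^(M'+2-2-i) = (if i = M' then ((M'+2:ℚ))-1 else 0) := by
      rw [show (M'+2-2-i) = M'-i by omega]
      by_cases hii : i = M'
      · subst hii
        rw [if_pos rfl]
        rw [Nat.sub_self, pow_zero, mul_one]
        have h1 := cast_choose_q (i+1) i
        rw [Nat.choose_succ_self_right] at h1
        have hrw : (∏ s ∈ range i, (((i+2:ℕ):ℚ)-1-((0:ℕ):ℚ)-(s:ℚ)))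
            = ∏ s ∈ range i, (((i+1:ℕ):ℚ)-(s:ℚ)) :=
          Finset.prod_congr rfl (fun s _ => by push_cast; ring)
        rw [hrw, ← h1]
        push_cast
        ring
      · rw [if_neg hii]
        rw [Nat.cast_zero, zero_pow (show M'-i ≠ 0 by omega)]
        ring
    -- name the alternating-sum function
    set G : ℕ → ℚ := fun j => (-1:ℚ)^j * (((M'+2).choose j):ℚ) *
        ((∏ s ∈ range i, ((((M'+2):ℕ):ℚ)-1-(j:ℚ)-(s:ℚ))) / (Nat.factorial i) * (j:ℚ)^(M'+2-2-i)) with hG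
    have hsum0' : ∑ j ∈ range (M'+2+1), G j = 0 := by
      rw [hG]
      exact hsum0
    have hS : ∑ j ∈ range (M'+1), G (j+1) = - G 0 - G (M'+2) := by
      rw [Finset.sum_range_succ, Finset.sum_range_succ'] at hsum0'
      linarith
    have hG0 : G 0 = (if i = M' then (((M'+2:ℕ)):ℚ)-1 else 0) := by
      rw [hG]
      simp only []
      rw [hq0]
      simp only [Nat.choose_zero_right, Nat.cast_one, pow_zero]
      push_cast
      split <;> ring
    have hGM : G (M'+2) = (-1:ℚ)^(M'+2) * ((-1:ℚ)^i * (((M'+2:ℕ)):ℚ)^(M'-i)) := by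
      rw [hG]
      simp only []
      rw [hqM, Nat.choose_self, Nat.cast_one]
      ring
    have hz : ((M'+2).choose 0 : ℚ) * ((0:ℕ):ℚ)^(((0:ℕ):ℤ)-1) * y *
        ((y+((M'+2:ℕ):ℚ))^i * (-((0:ℕ):ℚ))^(M'+2-1-0-i) * (((M'+2-1-0).choose i : ℚ))) = 0 := by
      rw [Nat.cast_zero, zero_zpow _ (by norm_num)]
      ring
    have hterms : ∑ j ∈ range (M'+2), ((M'+2).choose j : ℚ) * (j:ℚ)^((j:ℤ)-1) * y *
          ((y+((M'+2:ℕ):ℚ))^i * (-(j:ℚ))^(M'+2-1-j-i) * (((M'+2-1-j).choose i : ℚ)))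
        = (y*(y+((M'+2:ℕ):ℚ))^i*(-1:ℚ)^(M'+2-1-i)) * ∑ j ∈ range (M'+1), G (j+1) := by
      rw [Finset.sum_range_succ']
      rw [hz, add_zero, Finset.mul_sum]
      apply Finset.sum_congr rfl
      intro j hj
      simp only [Finset.mem_range] at hj
      rw [ha (j+1) (by omega) (by omega), hG]
    rw [hterms, hS, hG0, hGM]
    rw [show (M'+2-1-i) = (M'+1)-i by omega, neg_one_pow_sub_q _ _ (by omega : i ≤ M'+1)]
    rw [show (-1:ℚ)^(M'+1) = -(-1:ℚ)^M' by rw [pow_succ]; ring]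
    rw [show (-1:ℚ)^(M'+2) = (-1:ℚ)^M' by rw [pow_succ, pow_succ]; ring]
    rw [show (M'+2-2-i) = M'-i by omega]
    by_cases hii : i = M'
    · subst hii
      simp only [eq_self_iff_true, if_true, Nat.sub_self, pow_zero]
      rcases neg_one_pow_eq_or ℚ i with hA | hA <;> rw [hA] <;> ring
    · rw [if_neg hii, if_neg (show ¬ (i+2 = M'+2) by omega)]
      rcases neg_one_pow_eq_or ℚ M' with hA | hA <;> rcases neg_one_pow_eq_or ℚ i with hB | hB <;>
        rw [hA, hB] <;> ring


lemma hurwitz (M : ℕ) (hM : 1 ≤ M) (y : ℚ) (hy : 0 < y) :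
    ∑ j ∈ range (M+1), (M.choose j : ℚ) * (j:ℚ)^((j:ℤ)-1) * y * (y + M - j)^((M:ℤ)-(j:ℤ)-1)
      = (y+M)^((M:ℤ)-1) + y*((M:ℚ)-1)*(y+M)^((M:ℤ)-2) := by
  have hyM : (0:ℚ) < y + M := by positivity
  have hlast : (M.choose M : ℚ) * (M:ℚ)^((M:ℤ)-1) * y * (y + M - M)^((M:ℤ)-(M:ℤ)-1)
      = (M:ℚ)^(M-1 : ℕ) := by
    have h1 : (y + (M:ℚ) - M) = y := by ring
    have h2 : ((M:ℤ) - M - 1) = -1 := by ring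
    have h3 : (M:ℚ)^((M:ℤ)-1) = (M:ℚ)^(M-1 : ℕ) := by
      rw [← zpow_natCast]
      congr 1
      omega
    rw [h1, h2, h3, Nat.choose_self, zpow_neg_one]
    rw [Nat.cast_one, one_mul]
    field_simp
  rw [Finset.sum_range_succ, hlast]
  have hstep : ∀ j ∈ range M, (M.choose j : ℚ) * (j:ℚ)^((j:ℤ)-1) * y * (y + M - j)^((M:ℤ)-(j:ℤ)-1)
      = ∑ i ∈ range M, (M.choose j : ℚ) * (j:ℚ)^((j:ℤ)-1) * y *
          ((y+(M:ℚ))^i * (-(j:ℚ))^(M-1-j-i) * (((M-1-j).choose i : ℚ))) := by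
    intro j hj
    simp only [Finset.mem_range] at hj
    have h1 : (y + (M:ℚ) - j)^((M:ℤ)-(j:ℤ)-1) = (y + (M:ℚ) - j)^(M-1-j : ℕ) := by
      rw [← zpow_natCast]
      congr 1
      omega
    have h2 : (y + (M:ℚ) - j) = (y + (M:ℚ)) + (-(j:ℚ)) := by ring
    rw [h1, h2, add_pow]
    rw [Finset.mul_sum]
    rw [← Finset.sum_subset (Finset.range_subset_range.mpr (by omega : M-1-j+1 ≤ M))]
    intro i _ hi
    simp only [Finset.mem_range] at hi
    rw [Nat.choose_eq_zero_of_lt (show M-1-j < i by omega)]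
    simp
  rw [Finset.sum_congr rfl hstep, Finset.sum_comm]
  rw [Finset.sum_congr rfl (hinner_aux M hM y hy)]
  -- final assembly
  rcases Nat.lt_or_ge M 2 with hM1 | hM2
  · -- M = 1
    obtain rfl : M = 1 := by omega
    norm_num
  · obtain ⟨M', rfl⟩ : ∃ M', M = M'+2 := ⟨M-2, by omega⟩
    have hz1 : ((M'+2:ℕ):ℤ) - 1 = ((M'+1:ℕ):ℤ) := by push_cast; ring
    have hz2 : ((M'+2:ℕ):ℤ) - 2 = ((M':ℕ):ℤ) := by push_cast; ring
    rw [hz1, hz2, zpow_natCast, zpow_natCast]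
    rw [Finset.sum_range_succ, if_pos (by omega : M'+1+1 = M'+2), add_zero]
    have hsplit : ∀ i ∈ range (M'+1),
        (if i + 1 = M'+2 then (0:ℚ) else
          y*(y+((M'+2:ℕ):ℚ))^i*(((M'+2:ℕ)):ℚ)^(M'+2-2-i) +
            (if i + 2 = M'+2 then y*((((M'+2:ℕ)):ℚ)-1)*(y+((M'+2:ℕ):ℚ))^i else 0))
        = y*((y+((M'+2:ℕ):ℚ))^i*(((M'+2:ℕ)):ℚ)^(M'+1-1-i)) +
            (if i = M' then y*((((M'+2:ℕ)):ℚ)-1)*(y+((M'+2:ℕ):ℚ))^i else 0) := by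
      intro i hi
      simp only [Finset.mem_range] at hi
      rw [if_neg (by omega : ¬ (i+1 = M'+2))]
      rw [show (M'+2-2-i) = M'+1-1-i by omega]
      simp only [show (i+2 = M'+2) ↔ (i = M') from by omega]
      rw [mul_assoc]
    rw [Finset.sum_congr rfl hsplit, Finset.sum_add_distrib]
    rw [Finset.sum_ite_eq' (range (M'+1)) M'
      (fun i => y*((((M'+2:ℕ)):ℚ)-1)*(y+((M'+2:ℕ):ℚ))^i)]
    rw [if_pos (Finset.mem_range.mpr (by omega))]
    rw [← Finset.mul_sum]
    have hgeom := geom_sum₂_mul (y+((M'+2:ℕ):ℚ)) (((M'+2:ℕ)):ℚ) (M'+1)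
    have hy' : (y+((M'+2:ℕ):ℚ)) - (((M'+2:ℕ)):ℚ) = y := by ring
    rw [hy'] at hgeom
    have hne : y ≠ 0 := ne_of_gt hy
    have hsum : y * (∑ i ∈ range (M'+1), (y+((M'+2:ℕ):ℚ))^i * (((M'+2:ℕ)):ℚ)^(M'+1-1-i))
        = (y+((M'+2:ℕ):ℚ))^(M'+1) - (((M'+2:ℕ)):ℚ)^(M'+1) := by
      rw [mul_comm]
      exact hgeom
    rw [hsum, show (M'+2-1) = M'+1 by omega]
    push_cast
    ring



noncomputable def Tser : PowerSeries ℚ :=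
  PowerSeries.mk fun j => if j = 0 then 0 else ((j:ℚ) ^ ((j:ℤ) - 1)) / (Nat.factorial j : ℚ)

lemma coeff_Tser (j : ℕ) : PowerSeries.coeff j Tser
    = if j = 0 then 0 else ((j:ℚ) ^ ((j:ℤ) - 1)) / (Nat.factorial j : ℚ) := by
  simp [Tser]

lemma coeff_Tser_pow_zero : ∀ (k n : ℕ), n < k → PowerSeries.coeff n (Tser^k) = 0 := by
  intro k
  induction k with
  | zero => intro n h; omega
  | succ k ih =>
    intro n h
    rw [pow_succ, PowerSeries.coeff_mul]
    apply Finset.sum_eq_zero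
    intro p hp
    rw [Finset.HasAntidiagonal.mem_antidiagonal] at hp
    rcases Nat.lt_or_ge p.1 k with h1 | h1
    · rw [ih p.1 h1, zero_mul]
    · have : p.2 = 0 := by omega
      rw [this, coeff_Tser, if_pos rfl, mul_zero]

lemma coeff_Tser_pow : ∀ (k : ℕ), 1 ≤ k → ∀ (M : ℕ),
    PowerSeries.coeff (k+M) (Tser^k)
      = (k:ℚ) * ((k+M:ℕ):ℚ)^((M:ℤ)-1) / (Nat.factorial M : ℚ) := by
  intro k hk
  induction k, hk using Nat.le_induction with
  | base =>
    intro M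
    rw [pow_one, coeff_Tser, if_neg (by omega)]
    have hpos : (0:ℚ) < ((1+M:ℕ):ℚ) := by positivity
    have e1 : (((1+M:ℕ)):ℤ) - 1 = ((M:ℤ) - 1) + 1 := by push_cast; ring
    rw [e1, zpow_add₀ (ne_of_gt hpos), zpow_one]
    rw [show (1+M) = M+1 by omega, Nat.factorial_succ]
    have hfac : ((Nat.factorial M : ℚ)) ≠ 0 := by exact_mod_cast Nat.factorial_ne_zero M
    push_cast
    rw [div_eq_div_iff (by positivity) (by positivity)]
    ring
  | succ k hk ih =>
    intro M
    have hk0 : (0:ℚ) < (k:ℚ) := by exact_mod_cast hk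
    rw [pow_succ', PowerSeries.coeff_mul,
      Finset.Nat.sum_antidiagonal_eq_sum_range_succ_mk]
    -- restrict the sum to range (M+2)
    have hzero : ∀ j ∈ range (k+1+M+1), j ∉ range (M+2) →
        PowerSeries.coeff j Tser * PowerSeries.coeff (k+1+M-j) (Tser^k) = 0 := by
      intro j hj hj2
      simp only [Finset.mem_range] at hj hj2
      rw [coeff_Tser_pow_zero k (k+1+M-j) (by omega), mul_zero]
    rw [← Finset.sum_subset (Finset.range_subset_range.mpr (by omega : M+2 ≤ k+1+M+1)) hzero]
    -- termwise identification with the Hurwitz sum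
    have hterm : ∀ j ∈ range (M+2),
        PowerSeries.coeff j Tser * PowerSeries.coeff (k+1+M-j) (Tser^k)
        = (1 / (Nat.factorial (M+1) : ℚ)) *
          (((M+1).choose j : ℚ) * (j:ℚ)^((j:ℤ)-1) * (k:ℚ) *
            ((k:ℚ) + ((M+1:ℕ):ℚ) - (j:ℚ))^(((M+1:ℕ):ℤ)-(j:ℤ)-1)) := by
      intro j hj
      simp only [Finset.mem_range] at hj
      rcases Nat.eq_zero_or_pos j with rfl | hj1
      · rw [coeff_Tser, if_pos rfl, zero_mul]
        rw [show ((0:ℕ):ℚ) = 0 by norm_num, zero_zpow _ (by norm_num : ((0:ℕ):ℤ)-1 ≠ 0)]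
        ring
      · have hjM : j ≤ M+1 := by omega
        have hsub : k+1+M-j = k + (M+1-j) := by omega
        rw [coeff_Tser, if_neg (by omega), hsub, ih (M+1-j)]
        have hc : ((M+1).choose j : ℚ)
            = (Nat.factorial (M+1) : ℚ) / ((Nat.factorial j : ℚ) * (Nat.factorial (M+1-j) : ℚ)) := by
          rw [Nat.cast_choose ℚ hjM]
        have hcast1 : ((k + (M+1-j) : ℕ):ℚ) = (k:ℚ) + ((M+1:ℕ):ℚ) - (j:ℚ) := by
          push_cast [Nat.cast_sub hjM]
          ring
        have hcast2 : (((M+1-j:ℕ)):ℤ) - 1 = ((M+1:ℕ):ℤ) - (j:ℤ) - 1 := by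
          push_cast [Nat.cast_sub hjM]
          ring
        rw [hc, hcast1, hcast2]
        have hfj : ((Nat.factorial j : ℚ)) ≠ 0 := by exact_mod_cast Nat.factorial_ne_zero j
        have hfMj : ((Nat.factorial (M+1-j) : ℚ)) ≠ 0 := by exact_mod_cast Nat.factorial_ne_zero _
        have hfM1 : ((Nat.factorial (M+1) : ℚ)) ≠ 0 := by exact_mod_cast Nat.factorial_ne_zero _
        field_simp
    rw [Finset.sum_congr rfl hterm, ← Finset.mul_sum]
    have hhur := hurwitz (M+1) (by omega) (k:ℚ) hk0
    rw [show ((M+1:ℕ)) + 1 = M+2 by omega] at hhur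
    rw [hhur]
    -- final zpow algebra
    have hn1 : (0:ℚ) < (k:ℚ) + ((M+1:ℕ):ℚ) := by positivity
    have e1 : (((M+1:ℕ)):ℤ) - 1 = ((M:ℤ) - 1) + 1 := by push_cast; ring
    have e2 : (((M+1:ℕ)):ℤ) - 2 = (M:ℤ) - 1 := by push_cast; ring
    rw [e1, e2, zpow_add₀ (ne_of_gt hn1), zpow_one]
    have hcast3 : ((k+1+M:ℕ):ℚ) = (k:ℚ) + ((M+1:ℕ):ℚ) := by push_cast; ring
    rw [hcast3]
    rw [show Nat.factorial (M+1) = (M+1) * Nat.factorial M from Nat.factorial_succ M]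
    have hfM : ((Nat.factorial M : ℚ)) ≠ 0 := by exact_mod_cast Nat.factorial_ne_zero M
    push_cast
    have hM1 : ((M:ℚ)+1) ≠ 0 := by positivity
    field_simp
    ring

def wsum (m : ℕ →₀ ℕ) : ℕ := m.sum fun j e => j * e
def csum (m : ℕ →₀ ℕ) : ℕ := m.sum fun _ e => e

lemma wsum_add (a b : ℕ →₀ ℕ) : wsum (a+b) = wsum a + wsum b :=
  Finsupp.sum_add_index' (fun j => by simp) (fun j e₁ e₂ => by ring)

lemma csum_add (a b : ℕ →₀ ℕ) : csum (a+b) = csum a + csum b :=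
  Finsupp.sum_add_index' (fun j => rfl) (fun j e₁ e₂ => rfl)

def Hom (n k : ℕ) (f : MvPolynomial ℕ ℚ) : Prop :=
  ∀ m ∈ f.support, wsum m = n ∧ csum m = k

lemma hom_mul {n k n' k' : ℕ} {f g : MvPolynomial ℕ ℚ} (hf : Hom n k f) (hg : Hom n' k' g) :
    Hom (n+n') (k+k') (f*g) := by
  intro m hm
  have h := MvPolynomial.support_mul f g hm
  rw [Finset.mem_add] at h
  obtain ⟨a, ha, b, hb, rfl⟩ := h
  obtain ⟨ha1, ha2⟩ := hf a ha
  obtain ⟨hb1, hb2⟩ := hg b hb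
  rw [wsum_add, csum_add, ha1, ha2, hb1, hb2]
  exact ⟨rfl, rfl⟩

lemma hom_sum {ι : Type*} {s : Finset ι} {F : ι → MvPolynomial ℕ ℚ} {n k : ℕ}
    (h : ∀ i ∈ s, Hom n k (F i)) : Hom n k (∑ i ∈ s, F i) := by
  intro m hm
  rw [MvPolynomial.mem_support_iff] at hm
  by_contra hcon
  apply hm
  rw [MvPolynomial.coeff_sum]
  apply Finset.sum_eq_zero
  intro i hi
  by_contra hne
  exact hcon ((h i hi) m (MvPolynomial.mem_support_iff.mpr hne))

lemma hom_Z (j : ℕ) : Hom j 1 (PowerSeries.coeff j (Zser 1)) := by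
  rw [Zser, PowerSeries.coeff_mk]
  split
  · intro m hm
    simp at hm
  · intro m hm
    rw [MvPolynomial.mem_support_iff, MvPolynomial.coeff_C_mul] at hm
    have hx : MvPolynomial.coeff m (MvPolynomial.X j : MvPolynomial ℕ ℚ) ≠ 0 :=
      fun h => hm (by rw [h, mul_zero])
    rw [MvPolynomial.coeff_X'] at hx
    have hs : Finsupp.single j 1 = m := by
      by_contra h
      rw [if_neg h] at hx
      exact hx rfl
    subst hs
    constructor
    · rw [wsum, Finsupp.sum_single_index (by simp)]
      simp
    · rw [csum, Finsupp.sum_single_index rfl]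

lemma hom_Zpow (k : ℕ) : ∀ n, Hom n k (PowerSeries.coeff n ((Zser 1)^k)) := by
  induction k with
  | zero =>
    intro n
    rw [pow_zero, PowerSeries.coeff_one]
    split
    · intro m hm
      rw [MvPolynomial.mem_support_iff, MvPolynomial.coeff_one] at hm
      have hs : (0 : ℕ →₀ ℕ) = m := by
        by_contra h
        rw [if_neg h] at hm
        exact hm rfl
      subst hs
      constructor
      · rw [wsum, Finsupp.sum_zero_index]
        omega
      · rw [csum, Finsupp.sum_zero_index]
    · intro m hm; simp at hm
  | succ k ih =>
    intro n
    rw [pow_succ, PowerSeries.coeff_mul]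
    apply hom_sum
    intro p hp
    rw [Finset.HasAntidiagonal.mem_antidiagonal] at hp
    have := hom_mul (ih p.1) (hom_Z p.2)
    rwa [hp] at this

lemma bracket_eq_on (f : MvPolynomial ℕ ℚ) (s : Finset (ℕ →₀ ℕ)) (h : f.support ⊆ s) :
    bracket f = ∑ m ∈ s, f.coeff m * brval m := by
  rw [bracket]
  apply Finset.sum_subset h
  intro m _ hm
  rw [MvPolynomial.notMem_support_iff.mp hm, zero_mul]

lemma bracket_zero : bracket 0 = 0 := by simp [bracket]

lemma bracket_add (f g : MvPolynomial ℕ ℚ) : bracket (f+g) = bracket f + bracket g := by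
  set s := (f+g).support ∪ (f.support ∪ g.support) with hs
  rw [bracket_eq_on (f+g) s (Finset.subset_union_left),
    bracket_eq_on f s (subset_trans Finset.subset_union_left Finset.subset_union_right),
    bracket_eq_on g s (subset_trans Finset.subset_union_right Finset.subset_union_right),
    ← Finset.sum_add_distrib]
  apply Finset.sum_congr rfl
  intro m _
  rw [MvPolynomial.coeff_add]
  ring

lemma bracket_Cmul (a : ℚ) (f : MvPolynomial ℕ ℚ) :
    bracket (MvPolynomial.C a * f) = a * bracket f := by
  have hsub : (MvPolynomial.C a * f).support ⊆ f.support := by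
    intro m hm
    rw [MvPolynomial.mem_support_iff, MvPolynomial.coeff_C_mul] at hm
    rw [MvPolynomial.mem_support_iff]
    intro h
    exact hm (by rw [h, mul_zero])
  rw [bracket_eq_on _ _ hsub, bracket, Finset.mul_sum]
  apply Finset.sum_congr rfl
  intro m _
  rw [MvPolynomial.coeff_C_mul]
  ring

lemma bracket_sum {ι : Type*} (s : Finset ι) (F : ι → MvPolynomial ℕ ℚ) :
    bracket (∑ i ∈ s, F i) = ∑ i ∈ s, bracket (F i) := by
  induction s using Finset.cons_induction with
  | empty => simpa using bracket_zero
  | cons i s his ih =>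
    rw [Finset.sum_cons, Finset.sum_cons, bracket_add, ih]

lemma bracket_one : bracket 1 = 1 := by
  have h1 : (1 : MvPolynomial ℕ ℚ).support = {0} := by
    rw [show (1 : MvPolynomial ℕ ℚ) = MvPolynomial.monomial 0 1 from rfl,
      MvPolynomial.support_monomial]
    norm_num
  rw [bracket, h1, Finset.sum_singleton, MvPolynomial.coeff_zero_one, brval, if_pos rfl, mul_one]

lemma bracket_hom {n k : ℕ} {f : MvPolynomial ℕ ℚ} (hn : 1 ≤ n) (h : Hom n k f) :
    bracket f = (n:ℚ)^((k:ℤ)-3) * MvPolynomial.eval (fun _ => (1:ℚ)) f := by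
  rw [bracket, MvPolynomial.eval_eq, Finset.mul_sum]
  apply Finset.sum_congr rfl
  intro m hm
  obtain ⟨h1, h2⟩ := h m hm
  have hm0 : m ≠ 0 := by
    intro h0
    subst h0
    rw [wsum, Finsupp.sum_zero_index] at h1
    omega
  rw [brval, if_neg hm0, show (m.sum fun j e => j * e) = wsum m from rfl,
    show (m.sum fun _ e => e) = csum m from rfl, h1, h2]
  simp [one_pow]
  ring

lemma map_Zser : PowerSeries.map (MvPolynomial.eval (fun _ => (1:ℚ))) (Zser 1) = Tser := by
  ext n
  rw [PowerSeries.coeff_map, Zser, Tser, PowerSeries.coeff_mk, PowerSeries.coeff_mk]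
  split
  · simp
  · rw [map_mul, MvPolynomial.eval_C, MvPolynomial.eval_X, mul_one]
    norm_num

lemma bracket_coeff_Zpow (n k : ℕ) (hn : 1 ≤ n) :
    bracket (PowerSeries.coeff n ((Zser 1)^k))
      = (n:ℚ)^((k:ℤ)-3) * PowerSeries.coeff n (Tser^k) := by
  rw [bracket_hom hn (hom_Zpow k n)]
  congr 1
  rw [← map_Zser, ← map_pow, PowerSeries.coeff_map]

/-- Lemma 4 of the paper: `⟨exp(-Z₁)⟩ = 1 - x`. -/
theorem stmt_1 : bracketSeries (expNeg (Zser 1)) = 1 - PowerSeries.X := by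
  ext n
  rw [bracketSeries, PowerSeries.coeff_mk, expNeg, PowerSeries.coeff_mk, bracket_sum,
    map_sub, PowerSeries.coeff_one, PowerSeries.coeff_X]
  have hterm0 : ∀ k ∈ range (n+1),
      bracket (MvPolynomial.C ((-1:ℚ)^k / (Nat.factorial k : ℚ)) * PowerSeries.coeff n ((Zser 1)^k))
      = ((-1:ℚ)^k / (Nat.factorial k : ℚ)) * bracket (PowerSeries.coeff n ((Zser 1)^k)) :=
    fun k _ => bracket_Cmul _ _
  rw [Finset.sum_congr rfl hterm0]
  rcases Nat.eq_zero_or_pos n with rfl | hn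
  · rw [Finset.sum_range_one]
    norm_num
    exact bracket_one
  · rw [if_neg (by omega : ¬ n = 0)]
    have hterm1 : ∀ k ∈ range (n+1),
        ((-1:ℚ)^k / (Nat.factorial k : ℚ)) * bracket (PowerSeries.coeff n ((Zser 1)^k))
        = ((-1:ℚ)^k / (Nat.factorial k : ℚ)) * ((n:ℚ)^((k:ℤ)-3) * PowerSeries.coeff n (Tser^k)) :=
      fun k _ => by rw [bracket_coeff_Zpow n k hn]
    rw [Finset.sum_congr rfl hterm1]
    rcases Nat.lt_or_ge n 2 with hn1 | hn2
    · -- n = 1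
      obtain rfl : n = 1 := by omega
      rw [Finset.sum_range_succ, Finset.sum_range_one]
      have h0 : PowerSeries.coeff 1 (Tser^0) = 0 := by
        rw [pow_zero]
        simp [PowerSeries.coeff_one]
      have h1 : PowerSeries.coeff 1 (Tser^1) = 1 := by
        have := coeff_Tser_pow 1 le_rfl 0
        norm_num at this
        rw [pow_one]
        exact this
      rw [h0, h1]
      norm_num
    · -- n ≥ 2
      have hterm2 : ∀ k ∈ range (n+1),
          ((-1:ℚ)^k / (Nat.factorial k : ℚ)) * ((n:ℚ)^((k:ℤ)-3) * PowerSeries.coeff n (Tser^k))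
          = ((n:ℚ)^((n:ℤ)-4) / (Nat.factorial n : ℚ)) * ((-1:ℚ)^k * (n.choose k : ℚ) * (k:ℚ)) := by
        intro k hk
        simp only [Finset.mem_range] at hk
        rcases Nat.eq_zero_or_pos k with rfl | hk1
        · have h0 : PowerSeries.coeff n (Tser^0) = 0 := by
            rw [pow_zero]
            simp [PowerSeries.coeff_one]
            omega
          rw [h0]
          norm_num
        · have hkn : k ≤ n := by omega
          have hrw : n = k + (n - k) := by omega
          rw [show PowerSeries.coeff n (Tser^k) = PowerSeries.coeff (k + (n-k)) (Tser^k) from by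
            rw [← hrw]]
          rw [coeff_Tser_pow k hk1 (n-k), ← hrw]
          have hnne : ((n:ℚ)) ≠ 0 := by positivity
          have hzp : (n:ℚ)^((k:ℤ)-3) * (n:ℚ)^(((n-k:ℕ):ℤ)-1) = (n:ℚ)^((n:ℤ)-4) := by
            rw [← zpow_add₀ hnne]
            congr 1
            push_cast [Nat.cast_sub hkn]
            ring
          have hch : ((n.choose k : ℕ):ℚ)
              = (Nat.factorial n : ℚ) / ((Nat.factorial k : ℚ) * (Nat.factorial (n-k) : ℚ)) :=
            Nat.cast_choose ℚ hkn
          have hf1 : ((Nat.factorial k : ℚ)) ≠ 0 := by exact_mod_cast Nat.factorial_ne_zero k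
          have hf2 : ((Nat.factorial (n-k) : ℚ)) ≠ 0 := by exact_mod_cast Nat.factorial_ne_zero _
          have hf3 : ((Nat.factorial n : ℚ)) ≠ 0 := by exact_mod_cast Nat.factorial_ne_zero n
          rw [hch, ← hzp]
          field_simp
      rw [Finset.sum_congr rfl hterm2, ← Finset.mul_sum]
      have halt := alt_sum_choose_mono 1 n (by omega)
      rw [show (∑ k ∈ range (n+1), ((-1:ℚ)^k * (n.choose k : ℚ) * (k:ℚ)))
          = ∑ j ∈ range (n+1), (-1:ℚ)^j * (n.choose j : ℚ) * (j:ℚ)^1 from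
        Finset.sum_congr rfl (fun j _ => by rw [pow_one]), halt, mul_zero]
      rw [if_neg (by omega : ¬ n = 1)]
      norm_num
end

section
/- Let V be a ℚ-vector space with basis indexed by partitions of d, and let T : V → V be the linear map sending the basis vector e_p, for a partition p = (p_1,...,p_ℓ) of d, to Σ_{σ ∈ S_ℓ} e_{σ(p)}, where σ(p) is the partition of d whose parts are the sums σ(p)_i = Σ_{j in cycle γ_i of σ} p_j over the cycles of σ. Then T is invertible. -/
/-- The canonical representative (the least element) of the `σ`-orbit (cycle) of `j`. -/
def orbitRep {ℓ : ℕ} (σ : Equiv.Perm (Fin ℓ)) (j : Fin ℓ) : Fin ℓ :=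
  (Finset.univ.filter fun i => σ.SameCycle j i).min'
    ⟨j, by simp [Equiv.Perm.SameCycle.refl]⟩

/-- The partition `σ(p)` of `d`: its parts are the sums of the parts of `p` over the
cycles (orbits, including fixed points) of the permutation `σ` of the index set of the
parts of `p`.  The orbits of `σ` are precisely the fibers of `orbitRep σ`. -/
noncomputable def permPartition {d : ℕ} (p : Nat.Partition d)
    (σ : Equiv.Perm (Fin p.parts.toList.length)) : Nat.Partition d where
  parts :=
    (Finset.univ.image (orbitRep σ)).val.map fun j =>
      ∑ i ∈ Finset.univ.filter (fun i => orbitRep σ i = j), p.parts.toList.get i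
  parts_pos := by
    intro x hx
    simp only [Multiset.mem_map, Finset.mem_val, Finset.mem_image] at hx
    obtain ⟨j, ⟨a, -, ha⟩, rfl⟩ := hx
    refine Finset.sum_pos (fun i _ => p.parts_pos ?_) ⟨a, by simpa using ha⟩
    exact Multiset.mem_toList.mp (p.parts.toList.get_mem _)
  parts_sum := by
    have h :
        ((Finset.univ.image (orbitRep σ)).val.map fun j =>
            ∑ i ∈ Finset.univ.filter (fun i => orbitRep σ i = j),
              p.parts.toList.get i).sum =
          ∑ j ∈ Finset.univ.image (orbitRep σ),
            ∑ i ∈ Finset.univ.filter (fun i => orbitRep σ i = j),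
              p.parts.toList.get i := rfl
    rw [h,
      Finset.sum_fiberwise_of_maps_to
        (fun i _ => Finset.mem_image_of_mem (orbitRep σ) (Finset.mem_univ i)),
      ]
    simpa using (Fin.sum_univ_getElem p.parts.toList).trans ((Multiset.sum_toList p.parts).trans p.parts_sum)

lemma sameCycle_orbitRep {ℓ : ℕ} (σ : Equiv.Perm (Fin ℓ)) (j : Fin ℓ) :
    σ.SameCycle j (orbitRep σ j) := by
  have := Finset.min'_mem (Finset.univ.filter fun i => σ.SameCycle j i)
    ⟨j, by simp [Equiv.Perm.SameCycle.refl]⟩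
  simpa [orbitRep] using this

lemma orbitRep_eq_of_sameCycle {ℓ : ℕ} {σ : Equiv.Perm (Fin ℓ)} {i j : Fin ℓ}
    (h : σ.SameCycle i j) : orbitRep σ i = orbitRep σ j := by
  unfold orbitRep
  congr 1
  ext x
  simp only [Finset.mem_filter, Finset.mem_univ, true_and]
  exact ⟨fun hx => h.symm.trans hx, fun hx => h.trans hx⟩

lemma orbitRep_one {ℓ : ℕ} (j : Fin ℓ) : orbitRep (1 : Equiv.Perm (Fin ℓ)) j = j := by
  have h : (Finset.univ.filter fun i => (1 : Equiv.Perm (Fin ℓ)).SameCycle j i) = {j} := by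
    ext x
    simp [Equiv.Perm.SameCycle, eq_comm]
  apply le_antisymm
  · exact Finset.min'_le _ j (by simp [Equiv.Perm.SameCycle.refl])
  · apply Finset.le_min'
    intro x hx
    rw [h] at hx
    simp only [Finset.mem_singleton] at hx
    exact le_of_eq hx.symm

lemma image_orbitRep_card_lt {ℓ : ℕ} {σ : Equiv.Perm (Fin ℓ)} (h : σ ≠ 1) :
    (Finset.univ.image (orbitRep σ)).card < ℓ := by
  rcases lt_or_eq_of_le (le_trans (Finset.card_image_le) (by simp) :
      (Finset.univ.image (orbitRep σ)).card ≤ ℓ) with h' | h'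
  · exact h'
  exfalso
  have hinj : Set.InjOn (orbitRep σ) ↑(Finset.univ : Finset (Fin ℓ)) := by
    apply Finset.injOn_of_card_image_eq
    simpa using h'
  obtain ⟨j, hj⟩ : ∃ j, σ j ≠ j := by
    by_contra hc
    push_neg at hc
    exact h (Equiv.ext hc)
  have : orbitRep σ (σ j) = orbitRep σ j :=
    orbitRep_eq_of_sameCycle (Equiv.Perm.SameCycle.symm ⟨1, by simp⟩)
  exact hj (hinj (by simp) (by simp) this)


lemma permPartition_parts_card {d : ℕ} (p : Nat.Partition d)
    (σ : Equiv.Perm (Fin p.parts.toList.length)) :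
    (permPartition p σ).parts.card = (Finset.univ.image (orbitRep σ)).card := by
  show ((Finset.univ.image (orbitRep σ)).val.map _).card = _
  rw [Multiset.card_map]
  rfl

lemma permPartition_card_lt {d : ℕ} (p : Nat.Partition d)
    {σ : Equiv.Perm (Fin p.parts.toList.length)} (h : σ ≠ 1) :
    (permPartition p σ).parts.card < p.parts.card := by
  rw [permPartition_parts_card]
  have h1 := image_orbitRep_card_lt h
  have h2 := Multiset.length_toList p.parts
  omega

lemma permPartition_one {d : ℕ} (p : Nat.Partition d) :
    permPartition p 1 = p := by
  ext1
  show ((Finset.univ.image (orbitRep (1 : Equiv.Perm (Fin p.parts.toList.length)))).val.map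
      fun j => ∑ i ∈ Finset.univ.filter
        (fun i => orbitRep (1 : Equiv.Perm (Fin p.parts.toList.length)) i = j),
          p.parts.toList.get i) = p.parts
  have h1 : Finset.univ.image (orbitRep (1 : Equiv.Perm (Fin p.parts.toList.length)))
      = Finset.univ := by
    ext x; simp [orbitRep_one]
  have h2 : ∀ j : Fin p.parts.toList.length,
      (Finset.univ.filter
        (fun i => orbitRep (1 : Equiv.Perm (Fin p.parts.toList.length)) i = j)) = {j} := by
    intro j; ext x; simp [orbitRep_one]
  rw [h1]
  calc (Finset.univ.val.map fun j => ∑ i ∈ Finset.univ.filter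
        (fun i => orbitRep (1 : Equiv.Perm (Fin p.parts.toList.length)) i = j),
          p.parts.toList.get i)
      = Finset.univ.val.map (fun j => p.parts.toList.get j) := by
        apply Multiset.map_congr rfl
        intro j _
        rw [h2 j, Finset.sum_singleton]
    _ = p.parts := by
        rw [Fin.univ_val_map, List.ofFn_get, Multiset.coe_toList]

open scoped Classical in
/-- The matrix of the linear map `T` on the `ℚ`-vector space with basis indexed by the
partitions of `d`, sending the basis vector `e_p` to `∑_{σ ∈ S_{ℓ(p)}} e_{σ(p)}`:
its `(p,q)` entry is the number of `σ` with `σ(p) = q`. -/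
noncomputable def Tmat (d : ℕ) : Matrix (Nat.Partition d) (Nat.Partition d) ℚ :=
  fun p q =>
    ((Finset.univ.filter fun σ : Equiv.Perm (Fin p.parts.toList.length) =>
        permPartition p σ = q).card : ℚ)

open scoped Classical in
/-- The linear map `T : V → V`, `e_p ↦ ∑_{σ ∈ S_ℓ} e_{σ(p)}`, is invertible. -/
theorem stmt_6 (d : ℕ) : Function.Bijective (Matrix.toLin' (Tmat d)) := by
  classical
  set b : Nat.Partition d → ℕᵒᵈ := fun p => OrderDual.toDual p.parts.card with hb
  have hzero : ∀ p q : Nat.Partition d, p.parts.card < q.parts.card → Tmat d p q = 0 := by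
    intro p q hpq
    rw [Tmat]
    norm_cast
    rw [Finset.card_eq_zero, Finset.filter_eq_empty_iff]
    intro σ _ hσ
    rcases eq_or_ne σ 1 with rfl | hne
    · rw [permPartition_one] at hσ
      subst hσ
      exact lt_irrefl _ hpq
    · have := permPartition_card_lt p hne
      rw [hσ] at this
      omega
  have htri : (Tmat d).BlockTriangular b := by
    intro p q h
    exact hzero p q (by simpa [hb] using h)
  have hblock : ∀ a : ℕᵒᵈ, ((Tmat d).toSquareBlock b a).det = 1 := by
    intro a
    have : (Tmat d).toSquareBlock b a = 1 := by
      ext ⟨p, hp⟩ ⟨q, hq⟩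
      have hcard : p.parts.card = q.parts.card := by
        have : b p = b q := hp.trans hq.symm
        simpa [hb] using this
      by_cases hpq : p = q
      · subst hpq
        have h1 : (Finset.univ.filter fun σ : Equiv.Perm (Fin p.parts.toList.length) =>
            permPartition p σ = p) = {1} := by
          ext σ
          simp only [Finset.mem_filter, Finset.mem_univ, true_and, Finset.mem_singleton]
          constructor
          · intro hσ
            by_contra hne
            have := permPartition_card_lt p hne
            rw [hσ] at this
            exact lt_irrefl _ this
          · rintro rfl
            exact permPartition_one p
        simp [Matrix.toSquareBlock_def, Tmat, h1]
      · have h0 : (Finset.univ.filter fun σ : Equiv.Perm (Fin p.parts.toList.length) =>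
            permPartition p σ = q) = ∅ := by
          rw [Finset.filter_eq_empty_iff]
          intro σ _ hσ
          rcases eq_or_ne σ 1 with rfl | hne
          · rw [permPartition_one] at hσ
            exact hpq hσ
          · have := permPartition_card_lt p hne
            rw [hσ, hcard] at this
            exact lt_irrefl _ this
        have : (1 : Matrix {p' // b p' = a} {p' // b p' = a} ℚ)
            (⟨p, hp⟩ : {p' // b p' = a}) ⟨q, hq⟩ = 0 := by
          simp [Matrix.one_apply, hpq]
        rw [this]
        simp [Matrix.toSquareBlock_def, Tmat, h0]
    rw [this, Matrix.det_one]
  have hdet : (Tmat d).det ≠ 0 := by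
    rw [htri.det]
    simp [hblock]
  have hunit : IsUnit (Tmat d) := by
    rw [Matrix.isUnit_iff_isUnit_det]
    exact isUnit_iff_ne_zero.mpr hdet
  have : IsUnit (Matrix.toLin' (Tmat d)) := by
    have := hunit.map (Matrix.toLinAlgEquiv' :
      Matrix (Nat.Partition d) (Nat.Partition d) ℚ ≃ₐ[ℚ] _)
    convert this using 2
    exact LinearMap.ext fun v => by rw [Matrix.toLin'_apply, Matrix.toLinAlgEquiv'_apply]
  exact Module.End.isUnit_iff _ |>.mp this
end

section
/- The matrix Y_0(d) indexed by P_0(d) (partitions of d of length ≥ 2, ordered so that longer partitions come first and, among partitions of equal length, lexicographically with larger parts first) is upper-triangular, where Y_0(d)[(1^d),(1^d)] = 1/d and otherwise Y_0(d)[p,q] = (1/|Aut(p)|)(1/|Aut(q̂)|) Σ_θ Π_{i=1}^{ℓ(q)} [ multinomial(q_i; p_{i[1]},...,p_{i[ℓ_i]}) · q_i^{ℓ_i - 2} · Π_{j=1}^{ℓ_i} p_{i[j]}^{p_{i[j]}-1} ], the sum over functions θ : {1,...,ℓ(p)} → {1,...,ℓ(q)} with θ^{-1}(i) = {i[1],...,i[ℓ_i]}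 satisfying q_i = Σ_j p_{i[j]}. -/
/-- `|Aut(m)|` for a multiset of parts: the product over the distinct values of the
factorial of its multiplicity. -/
def autCard (m : Multiset ℕ) : ℕ :=
  ∏ x ∈ m.toFinset, Nat.factorial (m.count x)

/-- `p̂`: the multiset obtained by removing all parts equal to `1`. -/
def phat (m : Multiset ℕ) : Multiset ℕ := m.filter (fun x => x ≠ 1)

/-- `P₀(d)`: partitions of `d` of length at least 2. -/
abbrev Pzero (d : ℕ) := {p : Nat.Partition d // 2 ≤ p.parts.card}

/-- The matrix `X₀(d)`, indexed by partitions of `d` of length `≥ 2`: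
`X₀(d)[(1^d), q] = (-1)^{ℓ(q)-1} d`, and for `p ≠ (1^d)`,
`X₀(d)[p,q] = ∑_φ (-1)^{ℓ(q)-ℓ(p̂)} ∏_i q_{φ(i)}^{-p̂_i+2}`, summed over injections
`φ : {1,…,ℓ(p̂)} → {1,…,ℓ(q)}`. -/
noncomputable def Xmat (d : ℕ) : Matrix (Pzero d) (Pzero d) ℚ := fun p q =>
  let qL := q.1.parts.toList
  if p.1.parts = Multiset.replicate d 1 then (-1 : ℚ) ^ (qL.length - 1) * (d : ℚ)
  else
    let pL := (phat p.1.parts).toList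
    ∑ φ : Fin pL.length ↪ Fin qL.length,
      (-1 : ℚ) ^ (qL.length - pL.length) *
        ∏ i, (qL.get (φ i) : ℚ) ^ (2 - (pL.get i : ℤ))

/-- The parts of a partition listed in weakly decreasing order. -/
def descList (m : Multiset ℕ) : List ℕ := (m.sort (· ≤ ·)).reverse

/-- The total order on `P₀(d)` used in the paper: `p` comes (strictly) before `q` if `p`
is longer than `q`, or they have equal length and `p` is lexicographically larger (larger
parts first). -/
def ordBefore {d : ℕ} (p q : Nat.Partition d) : Prop :=
  q.parts.card < p.parts.card ∨
    (p.parts.card = q.parts.card ∧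
      List.Lex (· < ·) (descList q.parts) (descList p.parts))

/-- The matrix `Y₀(d)`: `Y₀(d)[(1^d),(1^d)] = 1/d` and otherwise
`Y₀(d)[p,q] = (1/|Aut(p)|)(1/|Aut(q̂)|) ∑_θ ∏_i binom(q_i; p's over θ⁻¹(i)) q_i^{ℓ_i-2}
∏_j p_{i[j]}^{p_{i[j]}-1}`, summed over `θ : {1,…,ℓ(p)} → {1,…,ℓ(q)}` such that the parts
of `p` indexed by `θ⁻¹(i)` sum to `q_i`. -/
noncomputable def Ymat (d : ℕ) : Matrix (Pzero d) (Pzero d) ℚ := fun p q =>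
  if p.1.parts = Multiset.replicate d 1 ∧ q.1.parts = Multiset.replicate d 1 then
    1 / (d : ℚ)
  else
    let pL := p.1.parts.toList
    let qL := q.1.parts.toList
    ((autCard p.1.parts : ℚ))⁻¹ * ((autCard (phat q.1.parts) : ℚ))⁻¹ *
      ∑ θ ∈ Finset.univ.filter
          (fun θ : Fin pL.length → Fin qL.length =>
            ∀ i, qL.get i = ∑ j ∈ Finset.univ.filter (fun j => θ j = i), pL.get j),
        ∏ i,
          ((Nat.multinomial (Finset.univ.filter (fun j => θ j = i))
                (fun j => pL.get j) : ℚ) *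
            (qL.get i : ℚ) ^ ((((Finset.univ.filter (fun j => θ j = i)).card : ℤ)) - 2) *
            ∏ j ∈ Finset.univ.filter (fun j => θ j = i),
              (pL.get j : ℚ) ^ (pL.get j - 1))

/-- `Y₀(d)` is upper-triangular for the paper's ordering on `P₀(d)`: the entry
`Y₀(d)[p,q]` vanishes whenever `q` strictly precedes `p`. -/
theorem stmt_10 (d : ℕ) (hd : 2 ≤ d) (p q : Pzero d) (h : ordBefore q.1 p.1) :
    Ymat d p q = 0 := by
  have hne : ¬ (p.1.parts = Multiset.replicate d 1 ∧ q.1.parts = Multiset.replicate d 1) := by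
    rintro ⟨hp, hq⟩
    have heq : p.1.parts = q.1.parts := hp.trans hq.symm
    rcases h with h1 | ⟨_, h2⟩
    · rw [heq] at h1; exact lt_irrefl _ h1
    · rw [heq] at h2; exact irrefl _ h2
  simp only [Ymat, if_neg hne]
  set pL := p.1.parts.toList with hpL
  set qL := q.1.parts.toList with hqL
  have hfilter : (Finset.univ.filter
      (fun θ : Fin pL.length → Fin qL.length =>
        ∀ i, qL.get i = ∑ j ∈ Finset.univ.filter (fun j => θ j = i), pL.get j)) = ∅ := by
    rw [Finset.filter_eq_empty_iff]
    intro θ _ hθ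
    -- every fiber is nonempty, since parts of q are positive
    have hqpos : ∀ i : Fin qL.length, 0 < qL.get i := by
      intro i
      exact q.1.parts_pos (Multiset.mem_toList.mp (qL.get_mem i))
    have hsurj : Function.Surjective θ := by
      intro i
      by_contra hc
      push_neg at hc
      have hempty : (Finset.univ.filter (fun j => θ j = i)) = ∅ := by
        rw [Finset.filter_eq_empty_iff]
        intro j _
        exact hc j
      have := hθ i
      rw [hempty, Finset.sum_empty] at this
      have := hqpos i
      omega
    have hcard : qL.length ≤ pL.length := by
      simpa using Fintype.card_le_of_surjective θ hsurj
    have hcards : q.1.parts.card ≤ p.1.parts.card := by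
      rwa [← Multiset.length_toList q.1.parts, ← Multiset.length_toList p.1.parts]
    rcases h with h1 | ⟨hc2, h2⟩
    · exact absurd h1 (not_lt.mpr hcards)
    · -- equal lengths: θ is bijective and p, q have the same parts
      have hlen : pL.length = qL.length := by
        rw [hpL, hqL, Multiset.length_toList, Multiset.length_toList, hc2]
      have hbij : Function.Bijective θ := by
        rw [Fintype.bijective_iff_surjective_and_card]
        exact ⟨hsurj, by simpa using hlen⟩
      set e := Equiv.ofBijective θ hbij with he
      have hfib : ∀ i : Fin qL.length,
          (Finset.univ.filter (fun j => θ j = i)) = {e.symm i} := by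
        intro i
        ext j
        simp only [Finset.mem_filter, Finset.mem_univ, true_and, Finset.mem_singleton]
        constructor
        · intro hj
          have : e j = i := hj
          rw [← this, Equiv.symm_apply_apply]
        · rintro rfl
          exact e.apply_symm_apply i
      have hget : ∀ i : Fin qL.length, qL.get i = pL.get (e.symm i) := by
        intro i
        rw [hθ i, hfib i, Finset.sum_singleton]
      have hparts : q.1.parts = p.1.parts := by
        have h1 : q.1.parts = (qL : Multiset ℕ) := (Multiset.coe_toList _).symm
        have h2' : p.1.parts = (pL : Multiset ℕ) := (Multiset.coe_toList _).symm
        rw [h1, h2', ← List.ofFn_get qL, ← List.ofFn_get pL]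
        have : List.ofFn qL.get = List.map (fun i => pL.get (e.symm i)) (List.finRange qL.length) := by
          rw [List.ofFn_eq_map]
          exact List.map_congr_left (fun i _ => hget i)
        rw [this]
        have h3 : (↑(List.map (fun i => pL.get (e.symm i)) (List.finRange qL.length)) : Multiset ℕ)
            = Multiset.map pL.get (Multiset.map e.symm (Finset.univ.val)) := by
          rw [Multiset.map_map]
          rfl
        rw [h3]
        have h4 : Multiset.map e.symm (Finset.univ.val : Multiset (Fin qL.length))
            = (Finset.univ.val : Multiset (Fin pL.length)) := by
          have := Finset.map_univ_equiv e.symm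
          rw [← this]
          rfl
        rw [h4, List.ofFn_eq_map]
        rfl
      rw [hparts] at h2
      exact irrefl _ h2
  rw [hfilter, Finset.sum_empty, mul_zero]
end

section
/- Fix α_1 ≥ 0 and let k = 1 + α_1. Then Σ over all tuples (p_1; {p_2,...,p_ℓ}) with p_i > 0 and Σ p_i = k of [1/|Aut({p_2,...,p_ℓ})|] · p_1^{-α_1} · Π_{i=2}^ℓ (-p_i)^{-1} · Π_{i=1}^ℓ (p_i^{p_i}/p_i!) · k^{ℓ-3} equals (-1)^{α_1}/(k·k!). -/
open Finset

lemma autCard_pos (m : Multiset ℕ) : 0 < autCard m :=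
  Finset.prod_pos fun _ _ => Nat.factorial_pos _

lemma autCard_cons (a : ℕ) (s : Multiset ℕ) :
    autCard (a ::ₘ s) = (s.count a + 1) * autCard s := by
  classical
  have hT : (a ::ₘ s).toFinset = insert a s.toFinset := Multiset.toFinset_cons a s
  have haT : a ∈ insert a s.toFinset := Finset.mem_insert_self _ _
  have h1 : autCard (a ::ₘ s)
      = ((a ::ₘ s).count a).factorial *
          ∏ x ∈ (insert a s.toFinset).erase a, ((a ::ₘ s).count x).factorial := by
    rw [autCard, hT, ← Finset.mul_prod_erase _ _ haT]
  have h2 : ∀ x ∈ (insert a s.toFinset).erase a,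
      ((a ::ₘ s).count x).factorial = (s.count x).factorial := by
    intro x hx
    rw [Multiset.count_cons_of_ne (Finset.ne_of_mem_erase hx)]
  have h3 : autCard s = (s.count a).factorial *
      ∏ x ∈ (insert a s.toFinset).erase a, (s.count x).factorial := by
    by_cases ha : a ∈ s.toFinset
    · rw [autCard, show insert a s.toFinset = s.toFinset from Finset.insert_eq_self.mpr ha,
        ← Finset.mul_prod_erase _ _ ha]
    · rw [autCard, Finset.erase_insert ha,
        Multiset.count_eq_zero_of_notMem (fun h => ha (Multiset.mem_toFinset.mpr h))]
      simp [Nat.factorial]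
  rw [h1, Finset.prod_congr rfl h2, Multiset.count_cons_self, Nat.factorial_succ, h3]
  ring

noncomputable def pw (f : ℕ → ℚ) (m : Multiset ℕ) : ℚ := (autCard m : ℚ)⁻¹ * (m.map f).prod

noncomputable def PS (f : ℕ → ℚ) (n : ℕ) : ℚ := ∑ μ : Nat.Partition n, pw f μ.parts

lemma pw_cons (f : ℕ → ℚ) (a : ℕ) (s : Multiset ℕ) :
    ((a ::ₘ s).count a : ℚ) * pw f (a ::ₘ s) = f a * pw f s := by
  rw [pw, pw, autCard_cons, Multiset.map_cons, Multiset.prod_cons, Multiset.count_cons_self]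
  have h1 : ((s.count a + 1 : ℕ) : ℚ) ≠ 0 := by positivity
  have h2 : ((autCard s : ℕ) : ℚ) ≠ 0 := by
    have := autCard_pos s
    positivity
  push_cast
  field_simp

lemma PS_zero (f : ℕ → ℚ) : PS f 0 = 1 := by
  rw [PS]
  rw [Finset.univ_unique, Finset.sum_singleton]
  rw [Nat.Partition.partition_zero_parts, pw]
  simp [autCard]

lemma parts_mem_Icc {n : ℕ} (μ : Nat.Partition n) {x : ℕ} (hx : x ∈ μ.parts) :
    x ∈ Icc 1 n := by
  rw [mem_Icc]
  constructor
  · exact μ.parts_pos hx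
  · have := Multiset.single_le_sum (fun y _ => Nat.zero_le y) x hx
    rw [μ.parts_sum] at this
    exact this

/-- erase a part `j` from a partition of `n`, giving a partition of `n - j`. -/
def erasePart {n j : ℕ} (μ : Nat.Partition n) (hμ : j ∈ μ.parts) : Nat.Partition (n - j) where
  parts := μ.parts.erase j
  parts_pos := fun hi => μ.parts_pos (Multiset.mem_of_mem_erase hi)
  parts_sum := by
    have hc : j ::ₘ μ.parts.erase j = μ.parts := Multiset.cons_erase hμ
    have hs : (j ::ₘ μ.parts.erase j).sum = n := by rw [hc, μ.parts_sum]
    rw [Multiset.sum_cons] at hs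
    omega

/-- add a part `j` to a partition of `n - j`, giving a partition of `n`. -/
def consPart {n j : ℕ} (hj1 : 1 ≤ j) (hjn : j ≤ n) (ν : Nat.Partition (n - j)) :
    Nat.Partition n where
  parts := j ::ₘ ν.parts
  parts_pos := by
    intro i hi
    rcases Multiset.mem_cons.mp hi with rfl | h
    · exact hj1
    · exact ν.parts_pos h
  parts_sum := by
    rw [Multiset.sum_cons, ν.parts_sum]
    omega

lemma count_sum (f : ℕ → ℚ) (n j : ℕ) (hj1 : 1 ≤ j) (hjn : j ≤ n) :
    ∑ μ : Nat.Partition n, (μ.parts.count j : ℚ) * pw f μ.parts = f j * PS f (n - j) := by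
  classical
  rw [PS, Finset.mul_sum]
  rw [← Finset.sum_filter_of_ne
    (p := fun μ : Nat.Partition n => j ∈ μ.parts)
    (fun μ _ hne => by
      by_contra h
      exact hne (by rw [Multiset.count_eq_zero_of_notMem h]; simp))]
  refine Finset.sum_bij'
    (fun μ hμ => erasePart μ (Finset.mem_filter.mp hμ).2)
    (fun ν _ => consPart hj1 hjn ν)
    (fun μ hμ => Finset.mem_univ _)
    (fun ν hν => Finset.mem_filter.mpr ⟨Finset.mem_univ _, Multiset.mem_cons_self _ _⟩)
    (fun μ hμ => Nat.Partition.ext (Multiset.cons_erase (Finset.mem_filter.mp hμ).2))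
    (fun ν hν => Nat.Partition.ext (Multiset.erase_cons_head _ _))
    ?_
  intro μ hμ
  have hmem := (Finset.mem_filter.mp hμ).2
  have hc : μ.parts = j ::ₘ μ.parts.erase j := (Multiset.cons_erase hmem).symm
  calc (μ.parts.count j : ℚ) * pw f μ.parts
      = (((j ::ₘ μ.parts.erase j).count j : ℕ) : ℚ) * pw f (j ::ₘ μ.parts.erase j) := by
        rw [← hc]
    _ = f j * pw f (μ.parts.erase j) := pw_cons f j (μ.parts.erase j)
    _ = f j * pw f (erasePart μ hmem).parts := rfl

lemma PS_rec (f : ℕ → ℚ) (n : ℕ) (hn : 1 ≤ n) :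
    (n:ℚ) * PS f n = ∑ j ∈ Icc 1 n, (j:ℚ) * f j * PS f (n - j) := by
  classical
  have key : ∀ μ : Nat.Partition n,
      (n:ℚ) * pw f μ.parts = ∑ j ∈ Icc 1 n, (j:ℚ) * ((μ.parts.count j : ℚ) * pw f μ.parts) := by
    intro μ
    have h2 : μ.parts.sum = ∑ x ∈ μ.parts.toFinset, μ.parts.count x • x := by
      conv_lhs => rw [← Multiset.map_id μ.parts]
      exact Finset.sum_multiset_map_count _ _
    have h1 : ∑ j ∈ Icc 1 n, μ.parts.count j * j = n := by
      calc ∑ j ∈ Icc 1 n, μ.parts.count j * j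
          = ∑ j ∈ Icc 1 n, μ.parts.count j • j := by
            exact Finset.sum_congr rfl fun x _ => (smul_eq_mul ..).symm
        _ = ∑ x ∈ μ.parts.toFinset, μ.parts.count x • x := by
            refine (Finset.sum_subset (fun x hx => parts_mem_Icc μ (Multiset.mem_toFinset.mp hx))
              ?_).symm
            intro x _ hx
            rw [Multiset.count_eq_zero_of_notMem (fun h => hx (Multiset.mem_toFinset.mpr h))]
            simp
        _ = μ.parts.sum := h2.symm
        _ = n := μ.parts_sum
    have h3 : (n:ℚ) = ∑ j ∈ Icc 1 n, (μ.parts.count j : ℚ) * j := by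
      have hc := congrArg (fun t : ℕ => (t:ℚ)) h1
      push_cast at hc
      linarith [hc]
    rw [h3, Finset.sum_mul]
    exact Finset.sum_congr rfl fun j _ => by ring
  rw [PS, Finset.mul_sum, Finset.sum_congr rfl (fun μ _ => key μ), Finset.sum_comm]
  apply Finset.sum_congr rfl
  intro j hj
  rw [mem_Icc] at hj
  rw [← Finset.mul_sum, count_sum f n j hj.1 hj.2]
  ring

lemma fd_step (s d : ℕ) (x : ℚ) :
    ∑ j ∈ range (s+2), (-1:ℚ)^j * ((s+1).choose j) * (x + j)^d
      = ∑ j ∈ range (s+1), (-1:ℚ)^j * (s.choose j) * ((x+j)^d - ((x+j)+1)^d) := by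
  have shift : ∀ y : ℚ, ∑ i ∈ range (s+1), (-1:ℚ)^i * (s.choose (i+1)) * (y + i)^d
      = -∑ j ∈ range (s+1), (-1:ℚ)^j * (s.choose j) * ((y-1) + j)^d + (y-1)^d := by
    intro y
    have h1 : ∑ j ∈ range (s+2), (-1:ℚ)^j * (s.choose j) * ((y-1) + j)^d
        = ∑ i ∈ range (s+1), (-1:ℚ)^(i+1) * (s.choose (i+1)) * ((y-1) + (i+1:ℕ))^d
          + (-1:ℚ)^0 * (s.choose 0) * ((y-1) + (0:ℕ))^d := Finset.sum_range_succ' _ (s+1)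
    have h2 : ∑ j ∈ range (s+2), (-1:ℚ)^j * (s.choose j) * ((y-1) + j)^d
        = ∑ j ∈ range (s+1), (-1:ℚ)^j * (s.choose j) * ((y-1) + j)^d := by
      rw [Finset.sum_range_succ, Nat.choose_eq_zero_of_lt (by omega)]
      simp
    rw [h2] at h1
    have h3 : ∀ i ∈ range (s+1), (-1:ℚ)^(i+1) * (s.choose (i+1)) * ((y-1) + (i+1:ℕ))^d
        = -((-1:ℚ)^i * (s.choose (i+1)) * (y + i)^d) := by
      intro i _
      push_cast
      ring
    rw [sum_congr rfl h3, Finset.sum_neg_distrib] at h1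
    simp only [pow_zero, Nat.choose_zero_right, Nat.cast_zero, Nat.cast_one, one_mul, add_zero] at h1
    linarith [h1]
  rw [Finset.sum_range_succ' _ (s+1)]
  have pascal : ∀ i ∈ range (s+1), (-1:ℚ)^(i+1) * ((s+1).choose (i+1)) * (x + (i+1:ℕ))^d
      = -((-1:ℚ)^i * (s.choose i) * ((x+1) + i)^d) + -((-1:ℚ)^i * (s.choose (i+1)) * ((x+1) + i)^d) := by
    intro i _
    rw [Nat.choose_succ_succ]
    push_cast
    ring
  rw [sum_congr rfl pascal, Finset.sum_add_distrib, Finset.sum_neg_distrib,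
    Finset.sum_neg_distrib, shift (x+1)]
  simp only [mul_sub]
  rw [Finset.sum_sub_distrib]
  simp only [add_sub_cancel_right, pow_zero, Nat.choose_zero_right, Nat.cast_zero, Nat.cast_one,
    one_mul, add_zero]
  simp only [show ∀ j:ℕ, x + (j:ℚ) + 1 = x + 1 + (j:ℚ) from fun j => by ring]
  ring

lemma fd : ∀ (s : ℕ) (d : ℕ), d < s → ∀ x : ℚ,
    ∑ j ∈ range (s+1), (-1:ℚ)^j * (s.choose j) * (x + j)^d = 0 := by
  intro s
  induction s with
  | zero => intro d hd; omega
  | succ s ih =>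
    intro d hd x
    rcases Nat.eq_zero_or_pos d with h0 | hdpos
    · subst h0
      have h := Int.alternating_sum_range_choose (n := s+1)
      rw [if_neg (Nat.succ_ne_zero s)] at h
      have h2 : ((∑ i ∈ range (s+2), (-1:ℤ)^i * ((s+1).choose i) : ℤ) : ℚ) = 0 := by
        rw [h]; norm_num
      push_cast at h2
      simpa using h2
    · rw [show s + 1 + 1 = s + 2 from rfl, fd_step s d x]
      have expand : ∀ j ∈ range (s+1), (-1:ℚ)^j * (s.choose j) * ((x+j)^d - ((x+j)+1)^d)
          = ∑ e ∈ range d, -(((d.choose e : ℚ)) * ((-1:ℚ)^j * (s.choose j) * (x+j)^e)) := by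
        intro j _
        have hb : ((x+j) + 1)^d = ∑ e ∈ range (d+1), (x+j)^e * 1^(d-e) * (d.choose e) :=
          add_pow _ _ _
        rw [Finset.sum_range_succ] at hb
        simp only [one_pow, mul_one, Nat.choose_self, Nat.cast_one] at hb
        rw [hb]
        have h3 : (-1:ℚ)^j * (s.choose j) *
            ((x+j)^d - (∑ e ∈ range d, (x+j)^e * (d.choose e) + (x+j)^d))
            = -((-1:ℚ)^j * (s.choose j) * ∑ e ∈ range d, (x+j)^e * (d.choose e)) := by ring
        rw [h3, Finset.mul_sum, ← Finset.sum_neg_distrib]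
        exact sum_congr rfl fun e _ => by ring
      rw [sum_congr rfl expand, Finset.sum_comm]
      apply Finset.sum_eq_zero
      intro e he
      rw [Finset.mem_range] at he
      rw [Finset.sum_neg_distrib, ← Finset.mul_sum, ih e (by omega) x]
      ring


lemma fd' (s : ℕ) (hs : 1 ≤ s) (x : ℚ) :
    ∑ j ∈ Icc 1 s, (-1:ℚ)^j * (s.choose j) * (x + j)^(s-1) = -x^(s-1) := by
  have h := fd s (s-1) (by omega) x
  rw [Finset.range_eq_Ico, Finset.sum_eq_sum_Ico_succ_bot (by omega : 0 < s+1),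
    Finset.Ico_add_one_right_eq_Icc] at h
  simp only [pow_zero, Nat.choose_zero_right, Nat.cast_zero, Nat.cast_one, one_mul, add_zero] at h
  linarith

lemma abel2 (m : ℕ) (x y : ℚ) :
    (y + m)^m + ∑ j ∈ Icc 1 m, (m.choose j : ℚ) * (x * (x+j)^(j-1)) * (y + ((m-j:ℕ):ℚ))^(m-j)
      = (x + y + m)^m := by
  set z := x + y + (m:ℚ) with hz
  have E1 : (y + m)^m = ∑ i ∈ range (m+1), z^i * ((m.choose i : ℚ) * (-x)^(m-i)) := by
    have hy : y + (m:ℚ) = z + (-x) := by rw [hz]; ring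
    rw [hy, add_pow]
    exact sum_congr rfl fun i _ => by ring
  have E2 : ∀ j ∈ Icc 1 m, (m.choose j : ℚ) * (x * (x+j)^(j-1)) * (y + ((m-j:ℕ):ℚ))^(m-j)
      = ∑ i ∈ range (m+1),
          z^i * (((m-j).choose i : ℚ) * ((m.choose j : ℚ) * (x * (x+j)^(j-1)) * (-(x+j))^(m-j-i))) := by
    intro j hj
    rw [mem_Icc] at hj
    have hyz : (y + ((m-j:ℕ):ℚ))^(m-j) = ∑ i ∈ range (m-j+1), z^i * (-(x+j))^(m-j-i) * ((m-j).choose i) := by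
      have : y + ((m-j:ℕ):ℚ) = z + (-(x+j)) := by
        rw [hz]; push_cast [hj.2]; ring
      rw [this]
      exact add_pow z (-(x+(j:ℚ))) (m-j)
    rw [hyz, Finset.mul_sum]
    rw [Finset.sum_subset (Finset.range_subset_range.2 (by omega : m-j+1 ≤ m+1)) ?_]
    · exact sum_congr rfl fun i hi => by ring
    · intro i _ hi
      rw [mem_range, not_lt] at hi
      rw [Nat.choose_eq_zero_of_lt (show m - j < i by omega)]
      simp
  rw [E1, sum_congr rfl E2, Finset.sum_comm, ← Finset.sum_add_distrib]
  have main : ∀ i ∈ range (m+1),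
      z^i * ((m.choose i : ℚ) * (-x)^(m-i)) +
        ∑ j ∈ Icc 1 m,
          z^i * (((m-j).choose i : ℚ) * ((m.choose j : ℚ) * (x * (x+j)^(j-1)) * (-(x+j))^(m-j-i)))
      = if i = m then z^m else 0 := by
    intro i hi
    rw [mem_range] at hi
    by_cases hne : i = m
    · subst hne
      rw [if_pos rfl]
      have hz0 : ∀ j ∈ Icc 1 i, z^i * (((i-j).choose i : ℚ) * ((i.choose j : ℚ) * (x * (x+j)^(j-1)) * (-(x+j))^(i-j-i)))
          = 0 := by
        intro j hj
        rw [mem_Icc] at hj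
        rw [Nat.choose_eq_zero_of_lt (by omega)]
        simp
      rw [Finset.sum_eq_zero hz0]
      simp
    · rw [if_neg hne]
      set s := m - i with hs
      have hs1 : 1 ≤ s := by omega
      have him : i = m - s := by omega
      rw [show (Icc 1 m) = Icc 1 s ∪ Icc (s+1) m by
        rw [← Finset.Ico_add_one_right_eq_Icc, ← Finset.Ico_add_one_right_eq_Icc, ← Finset.Ico_add_one_right_eq_Icc,
          Finset.Ico_union_Ico_eq_Ico (by omega) (by omega)]]
      rw [Finset.sum_union (by
        rw [← Finset.Ico_add_one_right_eq_Icc, ← Finset.Ico_add_one_right_eq_Icc]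
        exact Finset.Ico_disjoint_Ico_consecutive 1 (s+1) (m+1))]
      have hzero : ∑ j ∈ Icc (s+1) m,
          z^i * (((m-j).choose i : ℚ) * ((m.choose j : ℚ) * (x * (x+j)^(j-1)) * (-(x+j))^(m-j-i))) = 0 := by
        apply Finset.sum_eq_zero
        intro j hj
        rw [mem_Icc] at hj
        rw [Nat.choose_eq_zero_of_lt (by omega)]
        simp
      rw [hzero, add_zero]
      have hterm : ∀ j ∈ Icc 1 s,
          z^i * (((m-j).choose i : ℚ) * ((m.choose j : ℚ) * (x * (x+j)^(j-1)) * (-(x+j))^(m-j-i)))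
          = (z^i * ((m.choose s : ℚ) * (-1:ℚ)^s * x)) * ((-1:ℚ)^j * (s.choose j) * (x+j)^(s-1)) := by
        intro j hj
        rw [mem_Icc] at hj
        have h1 : (m-j).choose i = (m-j).choose (s-j) := by
          rw [him, ← Nat.choose_symm (by omega : m - s ≤ m - j)]
          congr 1
          omega
        have h2 : (m.choose j : ℚ) * ((m-j).choose (s-j) : ℚ) = (m.choose s : ℚ) * (s.choose j : ℚ) := by
          have := Nat.choose_mul (n := m) (k := s) (show j ≤ s by omega)
          exact_mod_cast congrArg (Nat.cast : ℕ → ℚ) this.symm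
        have h3 : (-(x+(j:ℚ)))^(m-j-i) = (-1:ℚ)^(s-j) * (x+j)^(s-j) := by
          rw [show m-j-i = s-j by omega, neg_pow]
        have h4 : (x+(j:ℚ))^(j-1) * (x+j)^(s-j) = (x+j)^(s-1) := by
          rw [← pow_add]
          congr 1
          omega
        have h5 : (-1:ℚ)^(s-j) * (-1:ℚ)^j = (-1:ℚ)^s := by
          rw [← pow_add]
          congr 1
          omega
        have hjj : ((-1:ℚ))^j * ((-1:ℚ))^j = 1 := by
          rw [← pow_add]
          exact Even.neg_one_pow ⟨j, rfl⟩
        have h5' : (-1:ℚ)^(s-j) = (-1:ℚ)^s * (-1:ℚ)^j := by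
          calc (-1:ℚ)^(s-j) = (-1:ℚ)^(s-j) * (((-1:ℚ))^j * ((-1:ℚ))^j) := by rw [hjj, mul_one]
            _ = ((-1:ℚ)^(s-j) * (-1:ℚ)^j) * (-1:ℚ)^j := by ring
            _ = (-1:ℚ)^s * (-1:ℚ)^j := by rw [h5]
        rw [h1, h3]
        calc z^i * (((m-j).choose (s-j) : ℚ) * ((m.choose j : ℚ) * (x * (x+j)^(j-1)) * ((-1:ℚ)^(s-j) * (x+j)^(s-j))))
            = (z^i * x) * ((m.choose j : ℚ) * ((m-j).choose (s-j):ℚ)) * ((-1:ℚ)^(s-j) * ((x+(j:ℚ))^(j-1) * (x+j)^(s-j))) := by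
              ring
          _ = (z^i * x) * ((m.choose s : ℚ) * (s.choose j : ℚ)) * ((-1:ℚ)^(s-j) * (x+j)^(s-1)) := by
              rw [h2, h4]
          _ = (z^i * ((m.choose s : ℚ) * (-1:ℚ)^s * x)) * ((-1:ℚ)^j * (s.choose j) * (x+j)^(s-1)) := by
              rw [h5']
              ring
      rw [sum_congr rfl hterm, ← Finset.mul_sum, fd' s hs1 x]
      have hc : (m.choose i : ℚ) = (m.choose s : ℚ) := by
        rw [him]
        norm_cast
        exact Nat.choose_symm (by omega)
      have hx : (-x)^(m-i) = (-1:ℚ)^s * (x * x^(s-1)) := by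
        rw [show m-i = s from rfl, neg_pow]
        congr 1
        conv_lhs => rw [show s = 1 + (s-1) by omega]
        rw [pow_add, pow_one]
      rw [hc, hx]
      ring
  rw [sum_congr rfl main, Finset.sum_ite_eq' (range (m+1)) m (fun _ => z^m)]
  rw [if_pos (by simp)]

lemma abelP (n : ℕ) (hn : 1 ≤ n) (k : ℚ) :
    (n:ℚ) * ((n:ℚ) - k)^(n-1)
      + k * ∑ j ∈ Icc 1 (n-1), (n.choose j : ℚ) * (j:ℚ)^j * ((n:ℚ) - j - k)^(n-j-1)
    = (n:ℚ)^n := by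
  set m := n - 1 with hmdef
  have hm : n = m + 1 := by omega
  have A := abel2 m (-k) 1
  set G : ℕ → ℚ := fun i => (m.choose i : ℚ) * (1+(i:ℚ))^i * (((m:ℚ)-i-k)^(m-i-1)) with hG
  have claim1 : ∑ j ∈ Icc 1 m, (m.choose j : ℚ) * ((-k) * ((-k)+j)^(j-1)) * ((1:ℚ) + ((m-j:ℕ):ℚ))^(m-j)
      = ∑ i ∈ range m, (-k) * G i := by
    rw [show (Icc 1 m) = Ico 1 (m+1) by rw [Finset.Ico_add_one_right_eq_Icc], Finset.sum_Ico_eq_sum_range]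
    simp only [Nat.add_sub_cancel]
    rw [← Finset.sum_range_reflect]
    apply sum_congr rfl
    intro i hi
    rw [mem_range] at hi
    have e1 : 1 + (m - 1 - i) = m - i := by omega
    rw [e1]
    have e2 : m - (m - i) = i := by omega
    rw [e2]
    have e3 : m.choose (m-i) = m.choose i := Nat.choose_symm (by omega)
    rw [e3, hG]
    have e4 : ((m - i : ℕ) : ℚ) = (m:ℚ) - i := by push_cast [show i ≤ m by omega]; ring
    rw [e4]
    ring
  have claim2 : ∑ j ∈ Icc 1 (n-1), (n.choose j : ℚ) * (j:ℚ)^j * ((n:ℚ) - j - k)^(n-j-1)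
      = (n:ℚ) * ∑ i ∈ range m, G i := by
    rw [show (Icc 1 (n-1)) = Ico 1 (m+1) by rw [Finset.Ico_add_one_right_eq_Icc], Finset.sum_Ico_eq_sum_range]
    simp only [Nat.add_sub_cancel]
    rw [Finset.mul_sum]
    apply sum_congr rfl
    intro i hi
    rw [mem_range] at hi
    have c1 : (n.choose (1+i) : ℚ) * ((1+i:ℕ):ℚ) = (n:ℚ) * (m.choose i : ℚ) := by
      have h0 := Nat.add_one_mul_choose_eq m i
      rw [← hm] at h0
      have h1 : n * m.choose i = n.choose (1+i) * (1+i) := by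
        rw [Nat.add_comm 1 i]
        exact h0
      exact_mod_cast congrArg (Nat.cast : ℕ → ℚ) h1.symm
    have c2 : ((1+i:ℕ):ℚ)^(1+i) = ((1+i:ℕ):ℚ) * (1+(i:ℚ))^i := by
      push_cast
      rw [Nat.add_comm 1 i, pow_succ]
      ring
    have c3 : (n:ℚ) - (1+i:ℕ) - k = (m:ℚ) - i - k := by
      push_cast [hm]
      ring
    have c4 : n - (1+i) - 1 = m - i - 1 := by omega
    rw [c2, c3, c4]
    calc (n.choose (1+i) : ℚ) * (((1+i:ℕ):ℚ) * (1+(i:ℚ))^i) * ((m:ℚ)-i-k)^(m-i-1)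
        = ((n.choose (1+i) : ℚ) * ((1+i:ℕ):ℚ)) * ((1+(i:ℚ))^i * ((m:ℚ)-i-k)^(m-i-1)) := by ring
      _ = (n:ℚ) * G i := by rw [c1, hG]; ring
  rw [claim1] at A
  rw [claim2]
  have hcast1 : (1:ℚ) + (m:ℚ) = (n:ℚ) := by push_cast [hm]; ring
  have hcast2 : -k + 1 + (m:ℚ) = (n:ℚ) - k := by push_cast [hm]; ring
  rw [hcast1, hcast2] at A
  have hsum : ∑ i ∈ range m, (-k) * G i = -k * ∑ i ∈ range m, G i := by
    rw [Finset.mul_sum]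
  rw [hsum] at A
  have hnm : (n:ℚ)^n = (n:ℚ) * (n:ℚ)^m := by
    rw [hm, pow_succ]
    ring
  rw [hnm]
  nlinarith [A]


noncomputable def fk (k : ℚ) (p : ℕ) : ℚ := -k * (p:ℚ)^(p-1) / (p.factorial : ℚ)

noncomputable def Bk (k : ℚ) (n : ℕ) : ℚ :=
  if n = 0 then 1 else -k * ((n:ℚ) - k)^(n-1) / (n.factorial : ℚ)

lemma Bk_rec (k : ℚ) (n : ℕ) (hn : 1 ≤ n) :
    (n:ℚ) * Bk k n = ∑ j ∈ Icc 1 n, (j:ℚ) * fk k j * Bk k (n - j) := by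
  have hfn : ((n.factorial : ℕ):ℚ) ≠ 0 := Nat.cast_ne_zero.mpr (Nat.factorial_ne_zero _)
  have A := abelP n hn k
  have hsplit : Icc 1 n = insert n (Icc 1 (n-1)) := by
    ext x
    simp only [mem_Icc, mem_insert]
    omega
  rw [hsplit, Finset.sum_insert (by simp only [mem_Icc]; omega)]
  have hBn : Bk k n = -k * ((n:ℚ)-k)^(n-1) / (n.factorial:ℚ) := by
    rw [Bk, if_neg (by omega)]
  have hB0 : Bk k (n - n) = 1 := by rw [Nat.sub_self, Bk]; simp
  have hterm : ∀ j ∈ Icc 1 (n-1), (j:ℚ) * fk k j * Bk k (n-j)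
      = (k^2 / (n.factorial:ℚ)) * ((n.choose j : ℚ) * (j:ℚ)^j * ((n:ℚ)-j-k)^(n-j-1)) := by
    intro j hj
    rw [mem_Icc] at hj
    have hj0 : (1:ℕ) ≤ j := hj.1
    have hjn : j ≤ n := by omega
    rw [Bk, if_neg (by omega), fk]
    have hc : ((n-j:ℕ):ℚ) = (n:ℚ) - j := by push_cast [hjn]; ring
    rw [hc]
    have hfj : ((j.factorial:ℕ):ℚ) ≠ 0 := Nat.cast_ne_zero.mpr (Nat.factorial_ne_zero _)
    have hfnj : (((n-j).factorial:ℕ):ℚ) ≠ 0 := Nat.cast_ne_zero.mpr (Nat.factorial_ne_zero _)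
    have hfac : ((n.choose j : ℕ):ℚ) * (j.factorial:ℚ) * ((n-j).factorial:ℚ) = (n.factorial:ℚ) := by
      exact_mod_cast congrArg (Nat.cast : ℕ → ℚ) (Nat.choose_mul_factorial_mul_factorial hjn)
    have hj1 : (j:ℚ)*(j:ℚ)^(j-1) = (j:ℚ)^j := by
      rw [show (j:ℚ)^j = (j:ℚ)^(1+(j-1)) by rw [show 1+(j-1) = j by omega], pow_add, pow_one]
    have expand : (j:ℚ) * (-k * (j:ℚ)^(j-1) / (j.factorial:ℚ)) *
        (-k * ((n:ℚ) - j - k)^(n-j-1) / ((n-j).factorial:ℚ))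
        = (k^2 * ((j:ℚ) * (j:ℚ)^(j-1)) * ((n:ℚ)-j-k)^(n-j-1)) /
            ((j.factorial:ℚ) * ((n-j).factorial:ℚ)) := by
      field_simp
    rw [expand, hj1, div_mul_eq_mul_div]
    rw [div_eq_div_iff (by positivity) hfn, ← hfac]
    ring
  rw [Finset.sum_congr rfl hterm, ← Finset.mul_sum, hBn, hB0, fk]
  have hnn : (n:ℚ)*(n:ℚ)^(n-1) = (n:ℚ)^n := by
    rw [show (n:ℚ)^n = (n:ℚ)^(1+(n-1)) by rw [show 1+(n-1) = n by omega], pow_add, pow_one]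
  set T := ∑ j ∈ Icc 1 (n-1), (n.choose j : ℚ) * (j:ℚ)^j * ((n:ℚ)-j-k)^(n-j-1) with hT
  have goal' : (n:ℚ) * (-k*((n:ℚ)-k)^(n-1)) = (n:ℚ)*(-k*(n:ℚ)^(n-1)) + k^2 * T := by
    linear_combination (-k) * A + k * hnn
  calc (n:ℚ) * (-k * ((n:ℚ)-k)^(n-1) / (n.factorial:ℚ))
      = ((n:ℚ) * (-k*((n:ℚ)-k)^(n-1))) / (n.factorial:ℚ) := by ring
    _ = ((n:ℚ)*(-k*(n:ℚ)^(n-1)) + k^2 * T) / (n.factorial:ℚ) := by rw [goal']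
    _ = (n:ℚ) * (-k * (n:ℚ)^(n-1) / (n.factorial:ℚ)) * 1 + k^2/(n.factorial:ℚ) * T := by ring

lemma PS_eq_Bk (k : ℚ) (n : ℕ) : PS (fk k) n = Bk k n := by
  induction n using Nat.strong_induction_on with
  | _ n ih =>
    rcases Nat.eq_zero_or_pos n with rfl | hn
    · rw [PS_zero, Bk]; simp
    · have h1 := PS_rec (fk k) n hn
      have h2 := Bk_rec k n hn
      have h3 : ∀ j ∈ Icc 1 n, (j:ℚ) * fk k j * PS (fk k) (n-j)
          = (j:ℚ) * fk k j * Bk k (n-j) := by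
        intro j hj
        rw [mem_Icc] at hj
        rw [ih (n-j) (by omega)]
      rw [Finset.sum_congr rfl h3] at h1
      have hn0 : (n:ℚ) ≠ 0 := by positivity
      exact mul_left_cancel₀ hn0 (h1.trans h2.symm)

/-- The localization identity `J_k = 1/(k·k!)`: for `k = 1 + α₁`, the sum over all
tuples `(p₁; {p₂,…,p_ℓ})` — `p₁ ≥ 1` distinguished and `{p₂,…,p_ℓ}` an unordered
multiset of positive integers (i.e. a partition of `k - p₁`, possibly empty) — of
`(1/|Aut({p₂,…,p_ℓ})|) · p₁^{-α₁} · ∏_{i≥2} (-p_i)⁻¹ · ∏_i (p_i^{p_i}/p_i!) · k^{ℓ-3}`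
equals `(-1)^{α₁} / (k·k!)`. -/
theorem stmt_19 (α₁ : ℕ) :
    ∑ p₁ ∈ Finset.Icc 1 (1 + α₁), ∑ μ : Nat.Partition (1 + α₁ - p₁),
        (autCard μ.parts : ℚ)⁻¹ * (p₁ : ℚ) ^ (-(α₁ : ℤ)) *
          ((μ.parts.map fun b : ℕ => (-(b : ℚ))⁻¹).prod) *
          ((p₁ : ℚ) ^ p₁ / (Nat.factorial p₁ : ℚ) *
            (μ.parts.map fun b : ℕ => (b : ℚ) ^ b / (Nat.factorial b : ℚ)).prod) *
          ((1 + α₁ : ℕ) : ℚ) ^ (((1 + μ.parts.card : ℕ) : ℤ) - 3) =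
      (-1 : ℚ) ^ α₁ / (((1 + α₁ : ℕ) : ℚ) * (Nat.factorial (1 + α₁) : ℚ)) := by
  classical
  set k : ℕ := 1 + α₁ with hk
  have hk1 : 1 ≤ k := by omega
  have hkQ : ((k:ℕ):ℚ) ≠ 0 := by positivity
  have hkfQ : ((k.factorial:ℕ):ℚ) ≠ 0 := Nat.cast_ne_zero.mpr (Nat.factorial_ne_zero _)
  have hinner : ∀ p₁ ∈ Icc 1 k,
      (∑ μ : Nat.Partition (k - p₁),
        (autCard μ.parts : ℚ)⁻¹ * (p₁ : ℚ) ^ (-(α₁ : ℤ)) *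
          ((μ.parts.map fun b : ℕ => (-(b : ℚ))⁻¹).prod) *
          ((p₁ : ℚ) ^ p₁ / (Nat.factorial p₁ : ℚ) *
            (μ.parts.map fun b : ℕ => (b : ℚ) ^ b / (Nat.factorial b : ℚ)).prod) *
          ((k : ℕ) : ℚ) ^ (((1 + μ.parts.card : ℕ) : ℤ) - 3))
      = ((p₁:ℚ) ^ (-(α₁:ℤ)) * ((p₁:ℚ)^p₁/(p₁.factorial:ℚ)) * (((k:ℕ):ℚ))^(-2:ℤ))
          * Bk ((k:ℕ):ℚ) (k - p₁) := by
    intro p₁ hp₁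
    rw [← PS_eq_Bk, PS, Finset.mul_sum]
    apply Finset.sum_congr rfl
    intro μ _
    have hzp : (((k:ℕ):ℚ)) ^ (((1 + μ.parts.card : ℕ) : ℤ) - 3)
        = (((k:ℕ):ℚ)) ^ (μ.parts.card) * (((k:ℕ):ℚ)) ^ (-2:ℤ) := by
      rw [← zpow_natCast (((k:ℕ):ℚ)) μ.parts.card, ← zpow_add₀ hkQ]
      congr 1
      push_cast
      ring
    have hmap : (μ.parts.map fun b : ℕ => (-(b : ℚ))⁻¹).prod *
        (μ.parts.map fun b : ℕ => (b : ℚ) ^ b / (Nat.factorial b : ℚ)).prod *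
        (((k:ℕ):ℚ)) ^ (μ.parts.card)
        = (μ.parts.map (fk ((k:ℕ):ℚ))).prod := by
      have h1 : (((k:ℕ):ℚ)) ^ (μ.parts.card) = (μ.parts.map fun _ : ℕ => ((k:ℕ):ℚ)).prod := by
        rw [Multiset.map_const', Multiset.prod_replicate]
      rw [h1, ← Multiset.prod_map_mul, ← Multiset.prod_map_mul]
      apply congrArg
      apply Multiset.map_congr rfl
      intro b hb
      have hb1 : 1 ≤ b := μ.parts_pos hb
      have hbQ : ((b:ℕ):ℚ) ≠ 0 := by positivity
      have hbf : ((b.factorial:ℕ):ℚ) ≠ 0 := Nat.cast_ne_zero.mpr (Nat.factorial_ne_zero _)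
      rw [fk]
      have hbb : (b:ℚ)^b = (b:ℚ)*(b:ℚ)^(b-1) := by
        rw [show (b:ℚ)^b = (b:ℚ)^(1+(b-1)) by rw [show 1+(b-1) = b by omega], pow_add, pow_one]
      rw [hbb]
      field_simp
    rw [hzp, pw, ← hmap]
    ring
  rw [Finset.sum_congr rfl hinner]
  have hsplit : Icc 1 k = insert k (Icc 1 (k-1)) := by
    ext x
    simp only [mem_Icc, mem_insert]
    omega
  rw [hsplit, Finset.sum_insert (by simp only [mem_Icc]; omega)]
  have hB0 : Bk ((k:ℕ):ℚ) (k - k) = 1 := by rw [Nat.sub_self, Bk]; simp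
  have hz2 : (((k:ℕ):ℚ))^(-2:ℤ) = (((k:ℕ):ℚ)^2)⁻¹ := by
    rw [show (-2:ℤ) = -((2:ℕ):ℤ) by norm_num, zpow_neg, zpow_natCast]
  have hzK : ((k:ℕ):ℚ) ^ (-(α₁:ℤ)) = (((k:ℕ):ℚ)^α₁)⁻¹ := by
    rw [zpow_neg, zpow_natCast]
  have hkk : ((k:ℕ):ℚ)^k = ((k:ℕ):ℚ)^α₁ * ((k:ℕ):ℚ) := by
    have h : ((k:ℕ):ℚ)^k = ((k:ℕ):ℚ)^(α₁+1) := by rw [show k = α₁+1 by omega]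
    rw [h, pow_succ]
  have hterm2 : ∀ p ∈ Icc 1 (k-1),
      ((p:ℚ) ^ (-(α₁:ℤ)) * ((p:ℚ)^p/(p.factorial:ℚ)) * (((k:ℕ):ℚ))^(-2:ℤ))
          * Bk ((k:ℕ):ℚ) (k - p)
      = ((-1:ℚ)^α₁ * (-((k:ℕ):ℚ)) * ((((k:ℕ):ℚ))^2)⁻¹ / (k.factorial:ℚ))
          * ((-1:ℚ)^p * (k.choose p : ℚ)) := by
    intro p hp
    rw [mem_Icc] at hp
    have hp1 : 1 ≤ p := hp.1
    have hpk : p ≤ k - 1 := hp.2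
    have hpQ : ((p:ℕ):ℚ) ≠ 0 := by positivity
    have hpf : ((p.factorial:ℕ):ℚ) ≠ 0 := Nat.cast_ne_zero.mpr (Nat.factorial_ne_zero _)
    have hkpf : (((k-p).factorial:ℕ):ℚ) ≠ 0 := Nat.cast_ne_zero.mpr (Nat.factorial_ne_zero _)
    rw [Bk, if_neg (by omega)]
    have hc : (((k-p:ℕ)):ℚ) - ((k:ℕ):ℚ) = -((p:ℕ):ℚ) := by
      push_cast [show p ≤ k by omega]
      ring
    rw [hc]
    have he : k - p - 1 = α₁ - p := by omega
    rw [he]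
    have hnegp : (-((p:ℕ):ℚ))^(α₁-p) = (-1:ℚ)^(α₁-p) * ((p:ℕ):ℚ)^(α₁-p) := by
      rw [neg_pow]
    rw [hnegp]
    have hsgn : (-1:ℚ)^(α₁-p) = (-1:ℚ)^α₁ * (-1:ℚ)^p := by
      have hpp : ((-1:ℚ))^p * ((-1:ℚ))^p = 1 := by
        rw [← pow_add]
        exact Even.neg_one_pow ⟨p, rfl⟩
      calc (-1:ℚ)^(α₁-p) = (-1:ℚ)^(α₁-p) * (((-1:ℚ))^p * ((-1:ℚ))^p) := by rw [hpp, mul_one]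
        _ = ((-1:ℚ)^(α₁-p) * (-1:ℚ)^p) * (-1:ℚ)^p := by ring
        _ = (-1:ℚ)^α₁ * (-1:ℚ)^p := by
            rw [← pow_add, show α₁-p+p = α₁ by omega]
    rw [hsgn]
    have hzpow : (p:ℚ) ^ (-(α₁:ℤ)) = ((p:ℚ)^α₁)⁻¹ := by rw [zpow_neg, zpow_natCast]
    rw [hzpow]
    have hfac : ((k.choose p : ℕ):ℚ) * (p.factorial:ℚ) * ((k-p).factorial:ℚ)
        = (k.factorial:ℚ) := by
      exact_mod_cast congrArg (Nat.cast : ℕ → ℚ)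
        (Nat.choose_mul_factorial_mul_factorial (show p ≤ k by omega))
    have hsplitpow : ((p:ℕ):ℚ)^(α₁-p) = (p:ℚ)^α₁ / (p:ℚ)^p := by
      rw [eq_div_iff (pow_ne_zero _ hpQ), ← pow_add]
      congr 1
      omega
    rw [hz2, hsplitpow]
    field_simp
    rw [← hfac]
    ring
  rw [Finset.sum_congr rfl hterm2, ← Finset.mul_sum]
  have halt : ∑ p ∈ Icc 1 (k-1), (-1:ℚ)^p * (k.choose p : ℚ) = -1 - (-1:ℚ)^k := by
    have h := Int.alternating_sum_range_choose_of_ne (show k ≠ 0 by omega)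
    have hQ : ∑ i ∈ range (k+1), (-1:ℚ)^i * (k.choose i : ℚ) = 0 := by
      have h2 := congrArg (fun t : ℤ => (t:ℚ)) h
      push_cast at h2
      convert h2 using 1
    rw [Finset.sum_range_succ, Finset.range_eq_Ico,
      Finset.sum_eq_sum_Ico_succ_bot (by omega : 0 < k)] at hQ
    rw [show Icc 1 (k-1) = Ico 1 k by rw [← Finset.Ico_add_one_right_eq_Icc]; congr 1; omega]
    simp only [pow_zero, Nat.choose_zero_right, Nat.cast_one, mul_one, one_mul,
      Nat.choose_self] at hQ
    linarith
  rw [halt, hB0, hzK, hz2, hkk]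
  have hm1k : (-1:ℚ)^k = -(-1:ℚ)^α₁ := by
    have h : (-1:ℚ)^k = (-1:ℚ)^(α₁+1) := by rw [show k = α₁+1 by omega]
    rw [h, pow_succ]
    ring
  rw [hm1k]
  have hsq : ((-1:ℚ)^α₁) * ((-1:ℚ)^α₁) = 1 := by
    rw [← pow_add]
    exact Even.neg_one_pow ⟨α₁, rfl⟩
  have hka : ((k:ℕ):ℚ)^α₁ ≠ 0 := pow_ne_zero _ hkQ
  have hsq2 : (-1:ℚ)^(α₁*2) = 1 := by
    rw [mul_comm, pow_mul]
    norm_num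
  field_simp
  ring_nf
  rw [hsq2]
  ring
end
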